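/- arXiv:0709.4467 — 6 statements merged into one kernel-verified Lean document; each statement's English description precedes it below -/
import Mathlib

section
/- Necessity part of the Lagrange method: if Problem (P_a) (for some a>0) admits an optimal solution X* whose objective value E[u(X*)] is finite, then there exists λ>0 such that X* = I(λξ) almost surely. -/
open MeasureTheory Filter Set
open scoped ENNReal

noncomputable def Vval {Ω : Type*} [MeasurableSpace Ω] (P : Measure Ω)
    (ξ : Ω → ℝ) (u : ℝ → ℝ) (a : ℝ) : ℝ≥0∞ :=
  ⨆ (X : Ω → ℝ) (_ : Measurable X) (_ : ∀ᵐ ω ∂P, 0 ≤ X ω)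
    (_ : ∫⁻ ω, ENNReal.ofReal (X ω * ξ ω) ∂P = ENNReal.ofReal a),
    ∫⁻ ω, ENNReal.ofReal (u (X ω)) ∂P

/-- `X` is an optimal solution of Problem (P_a): it is feasible (measurable,
nonnegative a.s., satisfying the budget constraint `E[Xξ] = a`) and its expected
utility dominates that of every feasible solution. -/
def IsOptimal {Ω : Type*} [MeasurableSpace Ω] (P : Measure Ω)
    (ξ : Ω → ℝ) (u : ℝ → ℝ) (a : ℝ) (X : Ω → ℝ) : Prop :=
  Measurable X ∧ (∀ᵐ ω ∂P, 0 ≤ X ω) ∧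
    (∫⁻ ω, ENNReal.ofReal (X ω * ξ ω) ∂P = ENNReal.ofReal a) ∧
    ∀ Y : Ω → ℝ, Measurable Y → (∀ᵐ ω ∂P, 0 ≤ Y ω) →
      (∫⁻ ω, ENNReal.ofReal (Y ω * ξ ω) ∂P = ENNReal.ofReal a) →
      ∫⁻ ω, ENNReal.ofReal (u (Y ω)) ∂P ≤ ∫⁻ ω, ENNReal.ofReal (u (X ω)) ∂P

/-- `fLag P ξ I lam = E[I(λξ)ξ]`, the function whose equation `f(λ) = a`
determines the Lagrange multiplier. -/
noncomputable def fLag {Ω : Type*} [MeasurableSpace Ω] (P : Measure Ω)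
    (ξ : Ω → ℝ) (I : ℝ → ℝ) (lam : ℝ) : ℝ≥0∞ :=
  ∫⁻ ω, ENNReal.ofReal (I (lam * ξ ω) * ξ ω) ∂P

section calc1
variable {u u' : ℝ → ℝ}

lemma uprime_anti (hu_conc : StrictConcaveOn ℝ (Set.Ici (0:ℝ)) u)
    (hu_deriv : ∀ x : ℝ, 0 < x → HasDerivAt u (u' x) x)
    {x y : ℝ} (hx : 0 < x) (hxy : x ≤ y) : u' y ≤ u' x := by
  rcases eq_or_lt_of_le hxy with rfl | h
  · exact le_refl _
  · have hy : 0 < y := hx.trans h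
    have h1 := hu_conc.concaveOn.le_slope_of_hasDerivAt (le_of_lt hx) (le_of_lt hy) h
      (hu_deriv y hy)
    have h2 := hu_conc.concaveOn.slope_le_of_hasDerivAt (le_of_lt hx) (le_of_lt hy) h
      (hu_deriv x hx)
    exact h1.trans h2

lemma grad_ineq (hu_conc : StrictConcaveOn ℝ (Set.Ici (0:ℝ)) u)
    (hu_deriv : ∀ x : ℝ, 0 < x → HasDerivAt u (u' x) x)
    {x y : ℝ} (hx : 0 < x) (hy : 0 < y) : u y ≤ u x + u' x * (y - x) := by
  rcases lt_trichotomy x y with h | rfl | h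
  · have := hu_conc.concaveOn.slope_le_of_hasDerivAt (le_of_lt hx) (le_of_lt hy) h
      (hu_deriv x hx)
    rw [slope_def_field] at this
    have hyx : (0:ℝ) < y - x := by linarith
    rw [div_le_iff₀ hyx] at this; nlinarith
  · simp
  · have := hu_conc.concaveOn.le_slope_of_hasDerivAt (le_of_lt hy) (le_of_lt hx) h
      (hu_deriv x hx)
    rw [slope_def_field] at this
    have hyx : (0:ℝ) < x - y := by linarith
    rw [le_div_iff₀ hyx] at this; nlinarith

lemma uprime_mul_le (hu_conc : StrictConcaveOn ℝ (Set.Ici (0:ℝ)) u)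
    (hu_deriv : ∀ x : ℝ, 0 < x → HasDerivAt u (u' x) x)
    (hu0 : u 0 = 0) {t : ℝ} (ht : 0 < t) : u' t * t ≤ u t := by
  have hchord := hu_conc.concaveOn.2 (show t ∈ Set.Ici (0:ℝ) from Set.mem_Ici.2 (le_of_lt ht))
    (show (0:ℝ) ∈ Set.Ici (0:ℝ) from Set.mem_Ici.2 (le_refl 0))
    (show (0:ℝ) ≤ 1/2 by norm_num) (show (0:ℝ) ≤ 1/2 by norm_num)
    (show (1:ℝ)/2 + 1/2 = 1 by norm_num)
  simp only [smul_eq_mul, hu0, mul_zero, add_zero] at hchord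
  have hgi := grad_ineq hu_conc hu_deriv ht (by positivity : (0:ℝ) < (1/2)*t)
  nlinarith

lemma gain_ineq (hu_conc : StrictConcaveOn ℝ (Set.Ici (0:ℝ)) u)
    (hu_deriv : ∀ x : ℝ, 0 < x → HasDerivAt u (u' x) x)
    (hu0 : u 0 = 0) {x t : ℝ} (hx : 0 ≤ x) (ht : 0 < t) :
    u' (x + t) * t ≤ u (x + t) - u x := by
  rcases eq_or_lt_of_le hx with rfl | hx'
  · simpa [hu0] using uprime_mul_le hu_conc hu_deriv hu0 (by linarith : (0:ℝ) < 0 + t)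
  · have := grad_ineq hu_conc hu_deriv (by linarith : (0:ℝ) < x + t) hx' (y := x)
    nlinarith

lemma loss_ineq (hu_conc : StrictConcaveOn ℝ (Set.Ici (0:ℝ)) u)
    (hu_deriv : ∀ x : ℝ, 0 < x → HasDerivAt u (u' x) x)
    {x s : ℝ} (hs : 0 < s) (hxs : 0 < x - s) :
    u x - u (x - s) ≤ u' (x - s) * s := by
  have := grad_ineq hu_conc hu_deriv hxs (by linarith : (0:ℝ) < x) (y := x)
  nlinarith

end calc1

/-- Master perturbation inequality. -/
lemma master_ineq
    {Ω : Type*} [MeasurableSpace Ω] (P : Measure Ω) [IsProbabilityMeasure P]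
    (ξ X : Ω → ℝ) (hξmeas : Measurable ξ) (hXmeas : Measurable X)
    (hX0 : ∀ᵐ ω ∂P, 0 ≤ X ω)
    (u u' : ℝ → ℝ) (hu_meas : Measurable u)
    (hu0 : u 0 = 0) (hu_nonneg : ∀ x : ℝ, 0 ≤ x → 0 ≤ u x)
    (hu_mono : StrictMonoOn u (Set.Ici (0:ℝ)))
    (hu_conc : StrictConcaveOn ℝ (Set.Ici (0:ℝ)) u)
    (hu_deriv : ∀ x : ℝ, 0 < x → HasDerivAt u (u' x) x)
    (hu'_pos : ∀ x : ℝ, 0 < x → 0 < u' x)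
    (a : ℝ)
    (hbudget : ∫⁻ ω, ENNReal.ofReal (X ω * ξ ω) ∂P = ENNReal.ofReal a)
    (hopt : ∀ Y : Ω → ℝ, Measurable Y → (∀ᵐ ω ∂P, 0 ≤ Y ω) →
      (∫⁻ ω, ENNReal.ofReal (Y ω * ξ ω) ∂P = ENNReal.ofReal a) →
      ∫⁻ ω, ENNReal.ofReal (u (Y ω)) ∂P ≤ ∫⁻ ω, ENNReal.ofReal (u (X ω)) ∂P)
    (hXfin : ∫⁻ ω, ENNReal.ofReal (u (X ω)) ∂P < ⊤)
    (A B : Set Ω) (hA : MeasurableSet A) (hB : MeasurableSet B) (hAB : Disjoint A B)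
    (η : ℝ) (hη : 0 < η)
    (hAprop : ∀ ω ∈ A, 0 ≤ X ω ∧ η ≤ ξ ω)
    (hBprop : ∀ ω ∈ B, η ≤ X ω ∧ η ≤ ξ ω)
    (ε δ : ℝ) (hε : 0 < ε) (hδ : 0 < δ)
    (hεδ : ENNReal.ofReal ε * P A = ENNReal.ofReal δ * P B)
    (hδsmall : δ ≤ η^2/2) :
    ∫⁻ ω in A, ENNReal.ofReal (u' (X ω + ε / ξ ω) * (ε / ξ ω)) ∂P
      ≤ ∫⁻ ω in B, ENNReal.ofReal (u' (X ω - δ / ξ ω) * (δ / ξ ω)) ∂P := by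
  classical
  -- the perturbed solution
  set Y : Ω → ℝ := A.piecewise (fun ω => X ω + ε / ξ ω)
    (B.piecewise (fun ω => X ω - δ / ξ ω) X) with hYdef
  have hYmeas : Measurable Y := by
    refine Measurable.piecewise hA (hXmeas.add (measurable_const.div hξmeas)) ?_
    exact Measurable.piecewise hB (hXmeas.sub (measurable_const.div hξmeas)) hXmeas
  have hYA : ∀ ω ∈ A, Y ω = X ω + ε / ξ ω := fun ω hω => Set.piecewise_eq_of_mem _ _ _ hω
  have hYB : ∀ ω ∈ B, Y ω = X ω - δ / ξ ω := by
    intro ω hω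
    have hωA : ω ∉ A := fun h => (hAB.ne_of_mem h hω) rfl
    simp [hYdef, Set.piecewise_eq_of_notMem _ _ _ hωA, Set.piecewise_eq_of_mem _ _ _ hω]
  have hYC : ∀ ω, ω ∉ A → ω ∉ B → Y ω = X ω := by
    intro ω hωA hωB
    simp [hYdef, Set.piecewise_eq_of_notMem _ _ _ hωA, Set.piecewise_eq_of_notMem _ _ _ hωB]
  -- basic facts on B
  have hBY : ∀ ω ∈ B, η / 2 ≤ Y ω ∧ 0 < X ω - δ / ξ ω ∧ 0 < δ / ξ ω := by
    intro ω hω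
    obtain ⟨hXη, hξη⟩ := hBprop ω hω
    have hξpos : 0 < ξ ω := lt_of_lt_of_le hη hξη
    have hd : δ / ξ ω ≤ η / 2 := by
      rw [div_le_iff₀ hξpos]
      nlinarith
    have h2 : 0 < δ / ξ ω := div_pos hδ hξpos
    refine ⟨?_, ?_, h2⟩
    · rw [hYB ω hω]; nlinarith
    · nlinarith
  have hAY : ∀ ω ∈ A, 0 < ε / ξ ω ∧ 0 < X ω + ε / ξ ω := by
    intro ω hω
    obtain ⟨hX0ω, hξη⟩ := hAprop ω hω
    have hξpos : 0 < ξ ω := lt_of_lt_of_le hη hξη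
    have h1 : 0 < ε / ξ ω := div_pos hε hξpos
    exact ⟨h1, by linarith⟩
  -- Y is nonnegative a.e.
  have hY0 : ∀ᵐ ω ∂P, 0 ≤ Y ω := by
    filter_upwards [hX0] with ω hX0ω
    by_cases hωA : ω ∈ A
    · rw [hYA ω hωA]
      have := (hAY ω hωA).1
      linarith
    · by_cases hωB : ω ∈ B
      · have := (hBY ω hωB).1
        linarith
      · rw [hYC ω hωA hωB]; exact hX0ω
  -- splitting of integrals
  set C : Set Ω := (A ∪ B)ᶜ with hCdef
  have hABm : MeasurableSet (A ∪ B) := hA.union hB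
  have hsplit : ∀ h : Ω → ℝ≥0∞, ∫⁻ ω, h ω ∂P =
      (∫⁻ ω in A, h ω ∂P + ∫⁻ ω in B, h ω ∂P) + ∫⁻ ω in C, h ω ∂P := by
    intro h
    rw [← lintegral_add_compl (h) hABm, lintegral_union hB hAB]
  -- budget equality for Y
  have hfA : ∫⁻ ω in A, ENNReal.ofReal (Y ω * ξ ω) ∂P
      = ∫⁻ ω in A, ENNReal.ofReal (X ω * ξ ω) ∂P + ENNReal.ofReal ε * P A := by
    have hcong : ∫⁻ ω in A, ENNReal.ofReal (Y ω * ξ ω) ∂P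
        = ∫⁻ ω in A, (ENNReal.ofReal (X ω * ξ ω) + ENNReal.ofReal ε) ∂P := by
      refine setLIntegral_congr_fun hA (fun ω hω => ?_)
      obtain ⟨hX0ω, hξη⟩ := hAprop ω hω
      have hξpos : 0 < ξ ω := lt_of_lt_of_le hη hξη
      have : Y ω * ξ ω = X ω * ξ ω + ε := by
        rw [hYA ω hω]; field_simp
      rw [this, ENNReal.ofReal_add (mul_nonneg hX0ω (le_of_lt hξpos)) (le_of_lt hε)]
    rw [hcong, lintegral_add_right _ measurable_const, setLIntegral_const]
  have hfB : ∫⁻ ω in B, ENNReal.ofReal (X ω * ξ ω) ∂P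
      = ∫⁻ ω in B, ENNReal.ofReal (Y ω * ξ ω) ∂P + ENNReal.ofReal δ * P B := by
    have hcong : ∫⁻ ω in B, ENNReal.ofReal (X ω * ξ ω) ∂P
        = ∫⁻ ω in B, (ENNReal.ofReal (Y ω * ξ ω) + ENNReal.ofReal δ) ∂P := by
      refine setLIntegral_congr_fun hB (fun ω hω => ?_)
      obtain ⟨hXη, hξη⟩ := hBprop ω hω
      have hξpos : 0 < ξ ω := lt_of_lt_of_le hη hξη
      obtain ⟨hY2, hpos, hdpos⟩ := hBY ω hω
      have hYξ : X ω * ξ ω = Y ω * ξ ω + δ := by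
        rw [hYB ω hω]; field_simp; ring
      have hYnn : 0 ≤ Y ω := by linarith
      rw [hYξ, ENNReal.ofReal_add (mul_nonneg hYnn (le_of_lt hξpos)) (le_of_lt hδ)]
    rw [hcong, lintegral_add_right _ measurable_const, setLIntegral_const]
  have hfC : ∫⁻ ω in C, ENNReal.ofReal (Y ω * ξ ω) ∂P
      = ∫⁻ ω in C, ENNReal.ofReal (X ω * ξ ω) ∂P := by
    refine setLIntegral_congr_fun hABm.compl (fun ω hω => ?_)
    rw [hYC ω (fun h => hω (Or.inl h)) (fun h => hω (Or.inr h))]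
  have hYbudget : ∫⁻ ω, ENNReal.ofReal (Y ω * ξ ω) ∂P = ENNReal.ofReal a := by
    rw [hsplit (fun ω => ENNReal.ofReal (Y ω * ξ ω)), hfA, hfC, hεδ]
    rw [hsplit (fun ω => ENNReal.ofReal (X ω * ξ ω)), hfB] at hbudget
    rw [← hbudget]; ring
  -- optimality
  have hUY := hopt Y hYmeas hY0 hYbudget
  have huXm : Measurable (fun ω => ENNReal.ofReal (u (X ω))) :=
    (hu_meas.comp hXmeas).ennreal_ofReal
  have huYm : Measurable (fun ω => ENNReal.ofReal (u (Y ω))) :=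
    (hu_meas.comp hYmeas).ennreal_ofReal
  -- gain estimate on A
  have hgA : ∫⁻ ω in A, ENNReal.ofReal (u (X ω)) ∂P
      + ∫⁻ ω in A, ENNReal.ofReal (u' (X ω + ε / ξ ω) * (ε / ξ ω)) ∂P
      ≤ ∫⁻ ω in A, ENNReal.ofReal (u (Y ω)) ∂P := by
    rw [← lintegral_add_left huXm]
    refine setLIntegral_mono' hA (fun ω hω => ?_)
    obtain ⟨hX0ω, hξη⟩ := hAprop ω hω
    obtain ⟨htpos, hXtpos⟩ := hAY ω hω
    have hgain := gain_ineq hu_conc hu_deriv hu0 hX0ω htpos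
    have h1 : 0 ≤ u (X ω) := hu_nonneg _ hX0ω
    have h2 : 0 ≤ u' (X ω + ε / ξ ω) * (ε / ξ ω) :=
      le_of_lt (mul_pos (hu'_pos _ hXtpos) htpos)
    rw [← ENNReal.ofReal_add h1 h2]
    refine ENNReal.ofReal_le_ofReal ?_
    rw [hYA ω hω]
    linarith
  -- loss estimate on B
  have hlB : ∫⁻ ω in B, ENNReal.ofReal (u (X ω)) ∂P
      ≤ ∫⁻ ω in B, ENNReal.ofReal (u (Y ω)) ∂P
      + ∫⁻ ω in B, ENNReal.ofReal (u' (X ω - δ / ξ ω) * (δ / ξ ω)) ∂P := by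
    rw [← lintegral_add_left huYm]
    refine setLIntegral_mono' hB (fun ω hω => ?_)
    obtain ⟨hXη, hξη⟩ := hBprop ω hω
    obtain ⟨hY2, hpos, hdpos⟩ := hBY ω hω
    have hloss := loss_ineq hu_conc hu_deriv hdpos hpos
    have h1 : 0 ≤ u (X ω - δ / ξ ω) := hu_nonneg _ (le_of_lt hpos)
    have h2 : 0 ≤ u' (X ω - δ / ξ ω) * (δ / ξ ω) :=
      le_of_lt (mul_pos (hu'_pos _ hpos) hdpos)
    rw [hYB ω hω, ← ENNReal.ofReal_add h1 h2]
    refine ENNReal.ofReal_le_ofReal ?_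
    linarith
  -- u(Y) ≤ u(X) on B
  have hBle : ∫⁻ ω in B, ENNReal.ofReal (u (Y ω)) ∂P
      ≤ ∫⁻ ω in B, ENNReal.ofReal (u (X ω)) ∂P := by
    refine setLIntegral_mono' hB (fun ω hω => ?_)
    obtain ⟨hXη, hξη⟩ := hBprop ω hω
    obtain ⟨hY2, hpos, hdpos⟩ := hBY ω hω
    refine ENNReal.ofReal_le_ofReal ?_
    rw [hYB ω hω]
    refine (hu_mono.monotoneOn) (Set.mem_Ici.2 (le_of_lt hpos))
      (Set.mem_Ici.2 (by linarith)) (by linarith)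
  have huC : ∫⁻ ω in C, ENNReal.ofReal (u (Y ω)) ∂P
      = ∫⁻ ω in C, ENNReal.ofReal (u (X ω)) ∂P := by
    refine setLIntegral_congr_fun hABm.compl (fun ω hω => ?_)
    rw [hYC ω (fun h => hω (Or.inl h)) (fun h => hω (Or.inr h))]
  -- finiteness
  have hres : ∀ S : Set Ω, ∫⁻ ω in S, ENNReal.ofReal (u (X ω)) ∂P ≠ ⊤ := by
    intro S
    exact ne_top_of_le_ne_top (ne_of_lt hXfin) (setLIntegral_le_lintegral _ _)
  have hfinA := hres A
  have hfinC := hres C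
  have hfinBY : ∫⁻ ω in B, ENNReal.ofReal (u (Y ω)) ∂P ≠ ⊤ :=
    ne_top_of_le_ne_top (hres B) hBle
  -- put everything together
  set G := ∫⁻ ω in A, ENNReal.ofReal (u' (X ω + ε / ξ ω) * (ε / ξ ω)) ∂P with hGdef
  set L := ∫⁻ ω in B, ENNReal.ofReal (u' (X ω - δ / ξ ω) * (δ / ξ ω)) ∂P with hLdef
  set a1 := ∫⁻ ω in A, ENNReal.ofReal (u (X ω)) ∂P with ha1
  set b1 := ∫⁻ ω in B, ENNReal.ofReal (u (Y ω)) ∂P with hb1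
  set c1 := ∫⁻ ω in C, ENNReal.ofReal (u (X ω)) ∂P with hc1
  have hkey : (a1 + b1 + c1) + G ≤ (a1 + b1 + c1) + L := by
    have h1 : a1 + G + b1 + c1 ≤ ∫⁻ ω, ENNReal.ofReal (u (Y ω)) ∂P := by
      rw [hsplit (fun ω => ENNReal.ofReal (u (Y ω))), huC]
      exact add_le_add_left (add_le_add_left hgA _) _
    have h2 : ∫⁻ ω, ENNReal.ofReal (u (X ω)) ∂P ≤ a1 + (b1 + L) + c1 := by
      rw [hsplit (fun ω => ENNReal.ofReal (u (X ω)))]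
      exact add_le_add_left (add_le_add_right hlB a1) c1
    calc (a1 + b1 + c1) + G = a1 + G + b1 + c1 := by ring
      _ ≤ a1 + (b1 + L) + c1 := le_trans h1 (le_trans hUY h2)
      _ = (a1 + b1 + c1) + L := by ring
  exact (ENNReal.add_le_add_iff_left
    (ENNReal.add_ne_top.mpr ⟨ENNReal.add_ne_top.mpr ⟨hfinA, hfinBY⟩, hfinC⟩)).mp hkey

set_option maxHeartbeats 1000000 in
/-- The limiting inequality: averages of `u'(X)/ξ` over a "high" set A are
dominated by averages over any other set B. -/
lemma star_ineq
    {Ω : Type*} [MeasurableSpace Ω] (P : Measure Ω) [IsProbabilityMeasure P]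
    (ξ X : Ω → ℝ) (hξmeas : Measurable ξ) (hXmeas : Measurable X)
    (hX0 : ∀ᵐ ω ∂P, 0 ≤ X ω)
    (u u' u'' : ℝ → ℝ) (hu_meas : Measurable u)
    (hu0 : u 0 = 0) (hu_nonneg : ∀ x : ℝ, 0 ≤ x → 0 ≤ u x)
    (hu_mono : StrictMonoOn u (Set.Ici (0:ℝ)))
    (hu_conc : StrictConcaveOn ℝ (Set.Ici (0:ℝ)) u)
    (hu_deriv : ∀ x : ℝ, 0 < x → HasDerivAt u (u' x) x)
    (hu_deriv2 : ∀ x : ℝ, 0 < x → HasDerivAt u' (u'' x) x)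
    (hu'_pos : ∀ x : ℝ, 0 < x → 0 < u' x)
    (a : ℝ)
    (hbudget : ∫⁻ ω, ENNReal.ofReal (X ω * ξ ω) ∂P = ENNReal.ofReal a)
    (hopt : ∀ Y : Ω → ℝ, Measurable Y → (∀ᵐ ω ∂P, 0 ≤ Y ω) →
      (∫⁻ ω, ENNReal.ofReal (Y ω * ξ ω) ∂P = ENNReal.ofReal a) →
      ∫⁻ ω, ENNReal.ofReal (u (Y ω)) ∂P ≤ ∫⁻ ω, ENNReal.ofReal (u (X ω)) ∂P)
    (hXfin : ∫⁻ ω, ENNReal.ofReal (u (X ω)) ∂P < ⊤)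
    (A B : Set Ω) (hA : MeasurableSet A) (hB : MeasurableSet B) (hAB : Disjoint A B)
    (η : ℝ) (hη : 0 < η)
    (hAprop : ∀ ω ∈ A, η ≤ X ω ∧ η ≤ ξ ω)
    (hBprop : ∀ ω ∈ B, η ≤ X ω ∧ η ≤ ξ ω)
    (hPA : P A ≠ 0) (hPB : P B ≠ 0) :
    P B * ∫⁻ ω in A, ENNReal.ofReal (u' (X ω) / ξ ω) ∂P
      ≤ P A * ∫⁻ ω in B, ENNReal.ofReal (u' (X ω) / ξ ω) ∂P := by
  classical
  set v : ℝ → ℝ := deriv u with hvdef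
  have hv : ∀ x : ℝ, 0 < x → v x = u' x := fun x hx => (hu_deriv x hx).deriv
  have hvmeas : Measurable v := measurable_deriv u
  have hvcont : ∀ x : ℝ, 0 < x → ContinuousAt v x := by
    intro x hx
    have h1 : ContinuousAt u' x := (hu_deriv2 x hx).continuousAt
    refine h1.congr ?_
    filter_upwards [eventually_gt_nhds hx] with y hy
    exact (hv y hy).symm
  have hPAne : P A ≠ ⊤ := measure_ne_top P A
  have hPBne : P B ≠ ⊤ := measure_ne_top P B
  have hPAt : 0 < (P A).toReal := ENNReal.toReal_pos hPA hPAne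
  have hPBt : 0 < (P B).toReal := ENNReal.toReal_pos hPB hPBne
  -- the perturbation sizes
  set c : ℕ → ℝ := fun k => (η^2/2) / (k+1) with hcdef
  have hc_pos : ∀ k, 0 < c k := fun k => by positivity
  have hc_le : ∀ k, c k ≤ η^2/2 := by
    intro k
    rw [hcdef]
    rw [div_le_iff₀ (by positivity : (0:ℝ) < (k:ℝ)+1)]
    nlinarith [Nat.cast_nonneg (α := ℝ) k, sq_nonneg η]
  have hc_to : Tendsto c atTop (nhds 0) := by
    have := tendsto_const_div_atTop_nhds_zero_nat (η^2/2)
    have h2 : Tendsto (fun k : ℕ => (k:ℝ) + 1) atTop atTop :=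
      tendsto_natCast_atTop_atTop.atTop_add tendsto_const_nhds
    exact Tendsto.div_atTop tendsto_const_nhds h2
  set εs : ℕ → ℝ := fun k => c k * (P B).toReal with hεsdef
  set δs : ℕ → ℝ := fun k => c k * (P A).toReal with hδsdef
  have hεs_pos : ∀ k, 0 < εs k := fun k => mul_pos (hc_pos k) hPBt
  have hδs_pos : ∀ k, 0 < δs k := fun k => mul_pos (hc_pos k) hPAt
  have hδs_le : ∀ k, δs k ≤ η^2/2 := by
    intro k
    have h1 : (P A).toReal ≤ 1 := by
      have := prob_le_one (μ := P) (s := A)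
      calc (P A).toReal ≤ (1 : ℝ≥0∞).toReal := ENNReal.toReal_mono (by simp) this
        _ = 1 := by simp
    calc δs k ≤ c k * 1 := by
          refine mul_le_mul_of_nonneg_left h1 (le_of_lt (hc_pos k))
      _ = c k := mul_one _
      _ ≤ η^2/2 := hc_le k
  have hεs_to : Tendsto εs atTop (nhds 0) := by
    simpa using hc_to.mul_const (P B).toReal
  have hδs_to : Tendsto δs atTop (nhds 0) := by
    simpa using hc_to.mul_const (P A).toReal
  have hεsor : ∀ k, ENNReal.ofReal (εs k) = ENNReal.ofReal (c k) * P B := by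
    intro k
    rw [hεsdef]
    rw [ENNReal.ofReal_mul (le_of_lt (hc_pos k)), ENNReal.ofReal_toReal hPBne]
  have hδsor : ∀ k, ENNReal.ofReal (δs k) = ENNReal.ofReal (c k) * P A := by
    intro k
    rw [hδsdef]
    rw [ENNReal.ofReal_mul (le_of_lt (hc_pos k)), ENNReal.ofReal_toReal hPAne]
  clear_value c εs δs
  -- master inequality for each k
  have hmaster : ∀ k : ℕ,
      ∫⁻ ω in A, ENNReal.ofReal (u' (X ω + εs k / ξ ω) * (εs k / ξ ω)) ∂P
        ≤ ∫⁻ ω in B, ENNReal.ofReal (u' (X ω - δs k / ξ ω) * (δs k / ξ ω)) ∂P := by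
    intro k
    refine master_ineq P ξ X hξmeas hXmeas hX0 u u' hu_meas hu0 hu_nonneg hu_mono hu_conc
      hu_deriv hu'_pos a hbudget hopt hXfin A B hA hB hAB η hη
      (fun ω hω => ⟨le_trans (le_of_lt hη) (hAprop ω hω).1, (hAprop ω hω).2⟩)
      hBprop (εs k) (δs k) (hεs_pos k) (hδs_pos k) ?_ (hδs_le k)
    rw [hεsor k, hδsor k]
    ring
  -- rewrite both sides as products
  have hGrw : ∀ k, ∫⁻ ω in A, ENNReal.ofReal (u' (X ω + εs k / ξ ω) * (εs k / ξ ω)) ∂P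
      = ENNReal.ofReal (εs k) * ∫⁻ ω in A, ENNReal.ofReal (v (X ω + εs k / ξ ω) / ξ ω) ∂P := by
    intro k
    rw [← lintegral_const_mul' _ _ ENNReal.ofReal_ne_top]
    refine setLIntegral_congr_fun hA (fun ω hω => ?_)
    obtain ⟨hXη, hξη⟩ := hAprop ω hω
    have hξpos : 0 < ξ ω := lt_of_lt_of_le hη hξη
    have hargpos : 0 < X ω + εs k / ξ ω := by
      have := div_pos (hεs_pos k) hξpos
      linarith
    rw [hv _ hargpos, ← ENNReal.ofReal_mul (le_of_lt (hεs_pos k))]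
    congr 1
    ring
  have hLrw : ∀ k, ∫⁻ ω in B, ENNReal.ofReal (u' (X ω - δs k / ξ ω) * (δs k / ξ ω)) ∂P
      = ENNReal.ofReal (δs k) * ∫⁻ ω in B, ENNReal.ofReal (v (X ω - δs k / ξ ω) / ξ ω) ∂P := by
    intro k
    rw [← lintegral_const_mul' _ _ ENNReal.ofReal_ne_top]
    refine setLIntegral_congr_fun hB (fun ω hω => ?_)
    obtain ⟨hXη, hξη⟩ := hBprop ω hω
    have hξpos : 0 < ξ ω := lt_of_lt_of_le hη hξη
    have hd : δs k / ξ ω ≤ η / 2 := by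
      rw [div_le_iff₀ hξpos]
      nlinarith [hδs_le k]
    have hargpos : 0 < X ω - δs k / ξ ω := by nlinarith
    rw [hv _ hargpos, ← ENNReal.ofReal_mul (le_of_lt (hδs_pos k))]
    congr 1
    ring
  -- cancel the ofReal (c k) factor
  have hstep : ∀ k, P B * ∫⁻ ω in A, ENNReal.ofReal (v (X ω + εs k / ξ ω) / ξ ω) ∂P ≤ P A * ∫⁻ ω in B, ENNReal.ofReal (v (X ω - δs k / ξ ω) / ξ ω) ∂P := by
    intro k
    have h1 := hmaster k
    rw [hGrw k, hLrw k, hεsor k, hδsor k] at h1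
    have h2 : ENNReal.ofReal (c k) * (P B * ∫⁻ ω in A, ENNReal.ofReal (v (X ω + εs k / ξ ω) / ξ ω) ∂P)
        ≤ ENNReal.ofReal (c k) * (P A * ∫⁻ ω in B, ENNReal.ofReal (v (X ω - δs k / ξ ω) / ξ ω) ∂P) := by
      rw [← mul_assoc, ← mul_assoc]
      exact h1
    exact (ENNReal.mul_le_mul_iff_right
      ((ENNReal.ofReal_pos.mpr (hc_pos k)).ne') ENNReal.ofReal_ne_top).mp h2
  -- dominated convergence on A
  have hIA : Tendsto (fun k => ∫⁻ ω in A, ENNReal.ofReal (v (X ω + εs k / ξ ω) / ξ ω) ∂P)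
      atTop (nhds (∫⁻ ω in A, ENNReal.ofReal (v (X ω) / ξ ω) ∂P)) := by
    refine tendsto_lintegral_of_dominated_convergence
      (fun _ => ENNReal.ofReal (u' η / η)) (fun k => ?_) (fun k => ?_) ?_ ?_
    · exact ((hvmeas.comp (hXmeas.add (measurable_const.div hξmeas))).div hξmeas).ennreal_ofReal
    · refine (ae_restrict_iff' hA).2 (ae_of_all _ fun ω hω => ?_)
      obtain ⟨hXη, hξη⟩ := hAprop ω hω
      have hξpos : 0 < ξ ω := lt_of_lt_of_le hη hξη
      have hq : 0 ≤ εs k / ξ ω := le_of_lt (div_pos (hεs_pos k) hξpos)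
      have harg : η ≤ X ω + εs k / ξ ω := by linarith
      have hargpos : 0 < X ω + εs k / ξ ω := lt_of_lt_of_le hη harg
      show ENNReal.ofReal (v (X ω + εs k / ξ ω) / ξ ω) ≤ ENNReal.ofReal (u' η / η)
      rw [hv _ hargpos]
      refine ENNReal.ofReal_le_ofReal ?_
      exact div_le_div₀ (le_of_lt (hu'_pos η hη))
        (uprime_anti hu_conc hu_deriv hη harg) hη hξη
    · refine ne_of_lt ?_
      rw [lintegral_const, Measure.restrict_apply_univ]
      exact ENNReal.mul_lt_top ENNReal.ofReal_lt_top (measure_lt_top _ _)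
    · refine (ae_restrict_iff' hA).2 (ae_of_all _ fun ω hω => ?_)
      obtain ⟨hXη, hξη⟩ := hAprop ω hω
      have hξpos : 0 < ξ ω := lt_of_lt_of_le hη hξη
      have hXpos : 0 < X ω := lt_of_lt_of_le hη hXη
      have h1 : Tendsto (fun k => X ω + εs k / ξ ω) atTop (nhds (X ω)) := by
        have h2 : Tendsto (fun k => εs k / ξ ω) atTop (nhds 0) := by
          simpa using hεs_to.div_const (ξ ω)
        simpa using tendsto_const_nhds.add h2
      have h3 : Tendsto (fun k => v (X ω + εs k / ξ ω)) atTop (nhds (v (X ω))) :=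
        (hvcont (X ω) hXpos).tendsto.comp h1
      exact ENNReal.tendsto_ofReal (h3.div_const (ξ ω))
  -- dominated convergence on B
  have hIB : Tendsto (fun k => ∫⁻ ω in B, ENNReal.ofReal (v (X ω - δs k / ξ ω) / ξ ω) ∂P)
      atTop (nhds (∫⁻ ω in B, ENNReal.ofReal (v (X ω) / ξ ω) ∂P)) := by
    refine tendsto_lintegral_of_dominated_convergence
      (fun _ => ENNReal.ofReal (u' (η/2) / η)) (fun k => ?_) (fun k => ?_) ?_ ?_
    · exact ((hvmeas.comp (hXmeas.sub (measurable_const.div hξmeas))).div hξmeas).ennreal_ofReal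
    · refine (ae_restrict_iff' hB).2 (ae_of_all _ fun ω hω => ?_)
      obtain ⟨hXη, hξη⟩ := hBprop ω hω
      have hξpos : 0 < ξ ω := lt_of_lt_of_le hη hξη
      have hd : δs k / ξ ω ≤ η / 2 := by
        rw [div_le_iff₀ hξpos]
        nlinarith [hδs_le k]
      have hdpos : 0 < δs k / ξ ω := div_pos (hδs_pos k) hξpos
      have hargpos : 0 < X ω - δs k / ξ ω := by nlinarith
      have harg : η/2 ≤ X ω - δs k / ξ ω := by nlinarith
      show ENNReal.ofReal (v (X ω - δs k / ξ ω) / ξ ω) ≤ ENNReal.ofReal (u' (η/2) / η)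
      rw [hv _ hargpos]
      refine ENNReal.ofReal_le_ofReal ?_
      exact div_le_div₀ (le_of_lt (hu'_pos (η/2) (by linarith)))
        (uprime_anti hu_conc hu_deriv (by linarith) harg) hη hξη
    · refine ne_of_lt ?_
      rw [lintegral_const, Measure.restrict_apply_univ]
      exact ENNReal.mul_lt_top ENNReal.ofReal_lt_top (measure_lt_top _ _)
    · refine (ae_restrict_iff' hB).2 (ae_of_all _ fun ω hω => ?_)
      obtain ⟨hXη, hξη⟩ := hBprop ω hω
      have hξpos : 0 < ξ ω := lt_of_lt_of_le hη hξη
      have hXpos : 0 < X ω := lt_of_lt_of_le hη hXη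
      have h1 : Tendsto (fun k => X ω - δs k / ξ ω) atTop (nhds (X ω)) := by
        have h2 : Tendsto (fun k => δs k / ξ ω) atTop (nhds 0) := by
          simpa using hδs_to.div_const (ξ ω)
        simpa using tendsto_const_nhds.sub h2
      have h3 : Tendsto (fun k => v (X ω - δs k / ξ ω)) atTop (nhds (v (X ω))) :=
        (hvcont (X ω) hXpos).tendsto.comp h1
      exact ENNReal.tendsto_ofReal (h3.div_const (ξ ω))
  -- pass to the limit
  have hlim : P B * ∫⁻ ω in A, ENNReal.ofReal (v (X ω) / ξ ω) ∂P
      ≤ P A * ∫⁻ ω in B, ENNReal.ofReal (v (X ω) / ξ ω) ∂P :=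
    le_of_tendsto_of_tendsto' (ENNReal.Tendsto.const_mul hIA (Or.inr hPBne))
      (ENNReal.Tendsto.const_mul hIB (Or.inr hPAne)) hstep
  have hvA : ∫⁻ ω in A, ENNReal.ofReal (v (X ω) / ξ ω) ∂P
      = ∫⁻ ω in A, ENNReal.ofReal (u' (X ω) / ξ ω) ∂P := by
    refine setLIntegral_congr_fun hA (fun ω hω => ?_)
    rw [hv _ (lt_of_lt_of_le hη (hAprop ω hω).1)]
  have hvB : ∫⁻ ω in B, ENNReal.ofReal (v (X ω) / ξ ω) ∂P
      = ∫⁻ ω in B, ENNReal.ofReal (u' (X ω) / ξ ω) ∂P := by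
    refine setLIntegral_congr_fun hB (fun ω hω => ?_)
    rw [hv _ (lt_of_lt_of_le hη (hBprop ω hω).1)]
  rw [hvA, hvB] at hlim
  exact hlim


/-- If a positive random variable is not a.s. constant, there exist separated
levels both attained with positive probability. -/
lemma exists_gap {Ω : Type*} [MeasurableSpace Ω] (P : Measure Ω) [IsProbabilityMeasure P]
    (Z : Ω → ℝ) (hZpos : ∀ᵐ ω ∂P, 0 < Z ω)
    (hnc : ¬ ∃ lam : ℝ, 0 < lam ∧ Z =ᵐ[P] fun _ => lam) :
    ∃ c d : ℝ, 0 < c ∧ c < d ∧ P {ω | Z ω ≤ c} ≠ 0 ∧ P {ω | d ≤ Z ω} ≠ 0 := by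
  by_contra hcon
  push_neg at hcon
  -- dichotomy : for all 0 < c < d, one of the sets is null
  have hdich : ∀ c d : ℝ, 0 < c → c < d → P {ω | Z ω ≤ c} = 0 ∨ P {ω | d ≤ Z ω} = 0 := by
    intro c d hc hcd
    by_cases h1 : P {ω | Z ω ≤ c} = 0
    · exact Or.inl h1
    · exact Or.inr (hcon c d hc hcd h1)
  -- there is a positive level with null lower set
  have hq0 : ∃ q0 : ℝ, 0 < q0 ∧ P {ω | Z ω ≤ q0} = 0 := by
    by_contra hq
    push_neg at hq
    -- then all upper sets are null, contradicting positivity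
    have hup : ∀ q : ℝ, 0 < q → P {ω | q ≤ Z ω} = 0 := by
      intro q hqpos
      rcases hdich (q/2) q (by linarith) (by linarith) with h | h
      · exact absurd h (hq (q/2) (by linarith))
      · exact h
    have h1 : P {ω | (1:ℝ) ≤ Z ω} = 0 := hup 1 one_pos
    have h2 : P {ω | (1:ℝ)/2 ≤ Z ω} = 0 := hup (1/2) (by norm_num)
    have hZsmall : ∀ᵐ ω ∂P, ∀ n : ℕ, ¬ ((1:ℝ)/(n+1) ≤ Z ω) := by
      rw [ae_all_iff]
      intro n
      have := hup (1/(n+1)) (by positivity)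
      rw [ae_iff]
      simpa using this
    have : ∀ᵐ ω ∂P, False := by
      filter_upwards [hZsmall, hZpos] with ω h1 h2
      obtain ⟨n, hn⟩ := exists_nat_gt (1 / Z ω)
      refine h1 n ?_
      rw [div_le_iff₀ (by linarith : (0:ℝ) < (n:ℝ)+1)]
      rw [div_lt_iff₀ h2] at hn
      nlinarith
    have h0 : P univ = 0 := by simpa [ae_iff] using this
    rw [measure_univ] at h0
    simp at h0
  obtain ⟨q0, hq0pos, hq0null⟩ := hq0
  -- the candidate constant
  set T : Set ℝ := {q : ℝ | 0 < q ∧ P {ω | Z ω ≤ q} ≠ 0} with hTdef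
  have hTne : T.Nonempty := by
    by_contra hTe
    rw [Set.not_nonempty_iff_eq_empty] at hTe
    -- all lower sets null
    have hlow : ∀ q : ℝ, P {ω | Z ω ≤ q} = 0 := by
      intro q
      rcases le_or_gt q 0 with h | h
      · refine measure_mono_null ?_ (ae_iff.mp hZpos)
        intro ω hω
        simp only [Set.mem_setOf_eq] at *
        push_neg
        linarith
      · by_contra hne
        have : q ∈ T := ⟨h, hne⟩
        rw [hTe] at this
        exact this
    have : P univ ≤ 0 := by
      have hcover : (univ : Set Ω) ⊆ ⋃ n : ℕ, {ω | Z ω ≤ n} := by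
        intro ω _
        obtain ⟨n, hn⟩ := exists_nat_gt (Z ω)
        exact Set.mem_iUnion.2 ⟨n, le_of_lt hn⟩
      calc P univ ≤ P (⋃ n : ℕ, {ω | Z ω ≤ n}) := measure_mono hcover
        _ = 0 := measure_iUnion_null (fun n => hlow n)
    rw [measure_univ] at this
    simp at this
  have hTbdd : BddBelow T := ⟨0, fun q hq => le_of_lt hq.1⟩
  set lam : ℝ := sInf T with hlamdef
  have hlam_lb : q0 ≤ lam := by
    refine le_csInf hTne (fun q hq => ?_)
    by_contra hlt
    push_neg at hlt
    exact hq.2 (measure_mono_null (fun ω (hω : Z ω ≤ q) => le_of_lt (lt_of_le_of_lt hω hlt)) hq0null)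
  have hlampos : 0 < lam := lt_of_lt_of_le hq0pos hlam_lb
  -- Z = lam a.s.
  have hlow : P {ω | Z ω < lam} = 0 := by
    have hcover : {ω | Z ω < lam} ⊆ {ω | Z ω ≤ q0/2} ∪ ⋃ q : ℚ, {ω | 0 < (q:ℝ) ∧ (q:ℝ) < lam ∧ Z ω ≤ q} := by
      intro ω hω
      simp only [Set.mem_setOf_eq] at hω
      rcases le_or_gt (Z ω) (q0/2) with h | h
      · exact Or.inl h
      · obtain ⟨q, hq1, hq2⟩ := exists_rat_btwn hω
        exact Or.inr (Set.mem_iUnion.2 ⟨q, ⟨by linarith, hq2, le_of_lt hq1⟩⟩)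
    refine measure_mono_null hcover ?_
    refine measure_union_null ?_ ?_
    · exact measure_mono_null (fun ω (hω : Z ω ≤ q0/2) => le_trans hω (by linarith)) hq0null
    · refine measure_iUnion_null (fun q => ?_)
      by_cases hq : 0 < (q:ℝ) ∧ (q:ℝ) < lam
      · have hqT : (q:ℝ) ∉ T := fun hmem => absurd (csInf_le hTbdd hmem) (not_le.2 hq.2)
        have : P {ω | Z ω ≤ (q:ℝ)} = 0 := by
          by_contra hne
          exact hqT ⟨hq.1, hne⟩
        refine measure_mono_null (fun ω hω => ?_) this
        exact hω.2.2
      · have hemp : {ω | 0 < (q:ℝ) ∧ (q:ℝ) < lam ∧ Z ω ≤ q} = (∅ : Set Ω) :=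
          Set.eq_empty_iff_forall_notMem.2 (fun ω hω => hq ⟨hω.1, hω.2.1⟩)
        rw [hemp]
        exact measure_empty
  have hhigh : P {ω | lam < Z ω} = 0 := by
    have hcover : {ω | lam < Z ω} ⊆ ⋃ n : ℕ, {ω | lam + 1/(n+1) ≤ Z ω} := by
      intro ω hω
      simp only [Set.mem_setOf_eq] at hω
      obtain ⟨n, hn⟩ := exists_nat_gt (1/(Z ω - lam))
      refine Set.mem_iUnion.2 ⟨n, ?_⟩
      have hpos : 0 < Z ω - lam := by linarith
      rw [div_lt_iff₀ hpos] at hn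
      have hn1 : (0:ℝ) < (n:ℝ)+1 := by positivity
      simp only [Set.mem_setOf_eq]
      rw [← sub_nonneg]
      have : 1/((n:ℝ)+1) ≤ Z ω - lam := by
        rw [div_le_iff₀ hn1]
        nlinarith
      linarith
    refine measure_mono_null hcover (measure_iUnion_null (fun n => ?_))
    have hc : lam < lam + 1/(2*(n+1)) := by
      have : (0:ℝ) < 1/(2*((n:ℝ)+1)) := by positivity
      linarith
    have hcd : lam + 1/(2*((n:ℝ)+1)) < lam + 1/((n:ℝ)+1) := by
      have h1 : (0:ℝ) < (n:ℝ)+1 := by positivity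
      have : 1/(2*((n:ℝ)+1)) < 1/((n:ℝ)+1) := by
        rw [div_lt_div_iff₀ (by positivity) h1]
        nlinarith
      linarith
    rcases hdich (lam + 1/(2*((n:ℝ)+1))) (lam + 1/((n:ℝ)+1)) (by positivity) hcd with h | h
    · -- lower set null is impossible since c > lam = inf T
      exfalso
      have hcT : ∃ q ∈ T, q < lam + 1/(2*((n:ℝ)+1)) := by
        by_contra hno
        push_neg at hno
        have : lam + 1/(2*((n:ℝ)+1)) ≤ lam := le_csInf hTne (fun q hq => hno q hq)
        linarith [hc]
      obtain ⟨q, hqT, hqlt⟩ := hcT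
      exact hqT.2 (measure_mono_null (fun ω (hω : Z ω ≤ q) =>
        (le_of_lt (lt_of_le_of_lt hω hqlt) : Z ω ≤ lam + 1/(2*((n:ℝ)+1)))) h)
    · exact h
  -- contradiction with non-constancy
  refine hnc ⟨lam, hlampos, ?_⟩
  have : P {ω | Z ω ≠ lam} = 0 := by
    have hsub : {ω | Z ω ≠ lam} ⊆ {ω | Z ω < lam} ∪ {ω | lam < Z ω} := by
      intro ω hω
      rcases lt_or_gt_of_ne hω with h | h
      · exact Or.inl h
      · exact Or.inr h
    exact measure_mono_null hsub (measure_union_null hlow hhigh)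
  rw [EventuallyEq, ae_iff]
  exact this

set_option maxHeartbeats 1000000 in
lemma X_pos_ae
    {Ω : Type*} [MeasurableSpace Ω] (P : Measure Ω) [IsProbabilityMeasure P]
    (ξ X : Ω → ℝ) (hξmeas : Measurable ξ) (hXmeas : Measurable X)
    (hξpos : ∀ᵐ ω ∂P, 0 < ξ ω)
    (hX0 : ∀ᵐ ω ∂P, 0 ≤ X ω)
    (u u' : ℝ → ℝ) (hu_meas : Measurable u)
    (hu0 : u 0 = 0) (hu_nonneg : ∀ x : ℝ, 0 ≤ x → 0 ≤ u x)
    (hu_mono : StrictMonoOn u (Set.Ici (0:ℝ)))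
    (hu_conc : StrictConcaveOn ℝ (Set.Ici (0:ℝ)) u)
    (hu_deriv : ∀ x : ℝ, 0 < x → HasDerivAt u (u' x) x)
    (hu'_pos : ∀ x : ℝ, 0 < x → 0 < u' x)
    (hu'_zero : Tendsto u' (nhdsWithin 0 (Set.Ioi 0)) atTop)
    (a : ℝ) (ha : 0 < a)
    (hbudget : ∫⁻ ω, ENNReal.ofReal (X ω * ξ ω) ∂P = ENNReal.ofReal a)
    (hopt : ∀ Y : Ω → ℝ, Measurable Y → (∀ᵐ ω ∂P, 0 ≤ Y ω) →
      (∫⁻ ω, ENNReal.ofReal (Y ω * ξ ω) ∂P = ENNReal.ofReal a) →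
      ∫⁻ ω, ENNReal.ofReal (u (Y ω)) ∂P ≤ ∫⁻ ω, ENNReal.ofReal (u (X ω)) ∂P)
    (hXfin : ∫⁻ ω, ENNReal.ofReal (u (X ω)) ∂P < ⊤) :
    ∀ᵐ ω ∂P, 0 < X ω := by
  by_contra hne
  -- the set where X = 0 has positive measure
  have hE : P {ω | X ω = 0 ∧ 0 < ξ ω} ≠ 0 := by
    intro h0
    refine hne ?_
    have h1 : P ({ω | ¬ 0 < X ω} \ ({ω | ¬ 0 ≤ X ω} ∪ {ω | ¬ 0 < ξ ω})) = 0 := by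
      refine measure_mono_null (fun ω hω => ?_) h0
      obtain ⟨h2, h3⟩ := hω
      simp only [Set.mem_union, Set.mem_setOf_eq, not_or, not_not] at h3
      obtain ⟨h4, h5⟩ := h3
      exact ⟨le_antisymm (not_lt.mp h2) (not_lt.mp (by simpa using h4)), by simpa using h5⟩
    have h2 : P ({ω | ¬ 0 ≤ X ω} ∪ {ω | ¬ 0 < ξ ω}) = 0 :=
      measure_union_null (ae_iff.mp hX0) (ae_iff.mp hξpos)
    have h3 : P {ω | ¬ 0 < X ω} = 0 := by
      have := measure_diff_null (μ := P) (s := {ω | ¬ 0 < X ω}) h2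
      rw [← this]
      exact h1
    rw [ae_iff]
    exact h3
  -- the set where X > 0 has positive measure
  have hF : P {ω | 0 < X ω ∧ 0 < ξ ω} ≠ 0 := by
    intro h0
    have hX00 : ∀ᵐ ω ∂P, X ω = 0 := by
      have h1 : ∀ᵐ ω ∂P, ¬ (0 < X ω ∧ 0 < ξ ω) := by
        rw [ae_iff]; simpa using h0
      filter_upwards [h1, hX0, hξpos] with ω hω h2 h3
      rcases eq_or_lt_of_le h2 with h | h
      · exact h.symm
      · exact absurd ⟨h, h3⟩ hω
    have : ∫⁻ ω, ENNReal.ofReal (X ω * ξ ω) ∂P = 0 := by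
      rw [← lintegral_zero (μ := P)]
      refine lintegral_congr_ae ?_
      filter_upwards [hX00] with ω hω
      simp [hω]
    rw [hbudget] at this
    exact absurd this (ne_of_gt (ENNReal.ofReal_pos.mpr ha))
  -- select good subsets
  have hEcover : {ω | X ω = 0 ∧ 0 < ξ ω} ⊆
      ⋃ n : ℕ, {ω | X ω = 0 ∧ 1/((n:ℝ)+1) ≤ ξ ω ∧ ξ ω ≤ (n:ℝ)+1} := by
    intro ω hω
    obtain ⟨h1, h2⟩ := hω
    obtain ⟨n, hn⟩ := exists_nat_gt (max (1/ξ ω) (ξ ω))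
    refine Set.mem_iUnion.2 ⟨n, ⟨h1, ?_, ?_⟩⟩
    · have h3 : 1/ξ ω < (n:ℝ)+1 := by
        have := le_max_left (1/ξ ω) (ξ ω)
        linarith
      rw [div_le_iff₀ (by positivity : (0:ℝ) < (n:ℝ)+1)]
      rw [div_lt_iff₀ h2] at h3
      nlinarith
    · have := le_max_right (1/ξ ω) (ξ ω)
      linarith
  have hFcover : {ω | 0 < X ω ∧ 0 < ξ ω} ⊆
      ⋃ n : ℕ, {ω | 1/((n:ℝ)+1) ≤ X ω ∧ 1/((n:ℝ)+1) ≤ ξ ω} := by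
    intro ω hω
    obtain ⟨h1, h2⟩ := hω
    obtain ⟨n, hn⟩ := exists_nat_gt (max (1/X ω) (1/ξ ω))
    refine Set.mem_iUnion.2 ⟨n, ⟨?_, ?_⟩⟩
    · have h3 : 1/X ω < (n:ℝ)+1 := by
        have := le_max_left (1/X ω) (1/ξ ω); linarith
      rw [div_le_iff₀ (by positivity : (0:ℝ) < (n:ℝ)+1)]
      rw [div_lt_iff₀ h1] at h3
      nlinarith
    · have h3 : 1/ξ ω < (n:ℝ)+1 := by
        have := le_max_right (1/X ω) (1/ξ ω); linarith
      rw [div_le_iff₀ (by positivity : (0:ℝ) < (n:ℝ)+1)]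
      rw [div_lt_iff₀ h2] at h3
      nlinarith
  have hEn : ∃ n : ℕ, P {ω | X ω = 0 ∧ 1/((n:ℝ)+1) ≤ ξ ω ∧ ξ ω ≤ (n:ℝ)+1} ≠ 0 := by
    by_contra hno
    push_neg at hno
    exact hE (measure_mono_null hEcover (measure_iUnion_null hno))
  have hFn : ∃ n : ℕ, P {ω | 1/((n:ℝ)+1) ≤ X ω ∧ 1/((n:ℝ)+1) ≤ ξ ω} ≠ 0 := by
    by_contra hno
    push_neg at hno
    exact hF (measure_mono_null hFcover (measure_iUnion_null hno))
  obtain ⟨nA, hnA⟩ := hEn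
  obtain ⟨nB, hnB⟩ := hFn
  set N : ℕ := max nA nB with hNdef
  set M : ℝ := (N:ℝ) + 1 with hMdef
  have hM1 : (1:ℝ) ≤ M := by
    rw [hMdef]
    have := Nat.cast_nonneg (α := ℝ) N
    linarith
  have hMpos : (0:ℝ) < M := by linarith
  set η : ℝ := 1 / M with hηdef
  have hη : 0 < η := by rw [hηdef]; positivity
  have hηM : η ≤ 1 := by
    rw [hηdef, div_le_one hMpos]; exact hM1
  -- the sets A and B
  set A : Set Ω := {ω | X ω = 0 ∧ 1/((nA:ℝ)+1) ≤ ξ ω ∧ ξ ω ≤ (nA:ℝ)+1} with hAdef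
  set B : Set Ω := {ω | 1/((nB:ℝ)+1) ≤ X ω ∧ 1/((nB:ℝ)+1) ≤ ξ ω} with hBdef
  have hAm : MeasurableSet A := by
    refine MeasurableSet.inter (hXmeas (measurableSet_singleton 0)) ?_
    exact MeasurableSet.inter (measurableSet_le measurable_const hξmeas)
      (measurableSet_le hξmeas measurable_const)
  have hBm : MeasurableSet B := by
    exact MeasurableSet.inter (measurableSet_le measurable_const hXmeas)
      (measurableSet_le measurable_const hξmeas)
  have hnAN : (nA:ℝ) + 1 ≤ M := by
    rw [hMdef]
    have : (nA:ℕ) ≤ N := le_max_left _ _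
    exact_mod_cast add_le_add_left (Nat.cast_le.mpr this) 1
  have hnBN : (nB:ℝ) + 1 ≤ M := by
    rw [hMdef]
    have : (nB:ℕ) ≤ N := le_max_right _ _
    exact_mod_cast add_le_add_left (Nat.cast_le.mpr this) 1
  have hAprop : ∀ ω ∈ A, (0:ℝ) ≤ X ω ∧ η ≤ ξ ω ∧ ξ ω ≤ M := by
    intro ω hω
    obtain ⟨h1, h2, h3⟩ := hω
    refine ⟨le_of_eq h1.symm, ?_, le_trans h3 hnAN⟩
    refine le_trans ?_ h2
    rw [hηdef]
    refine div_le_div_of_nonneg_left (by norm_num) (by positivity) hnAN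
  have hBprop : ∀ ω ∈ B, η ≤ X ω ∧ η ≤ ξ ω := by
    intro ω hω
    obtain ⟨h1, h2⟩ := hω
    have hle : η ≤ 1/((nB:ℝ)+1) := by
      rw [hηdef]
      refine div_le_div_of_nonneg_left (by norm_num) (by positivity) hnBN
    exact ⟨le_trans hle h1, le_trans hle h2⟩
  have hABdisj : Disjoint A B := by
    rw [Set.disjoint_left]
    intro ω hωA hωB
    have h1 := (hAprop ω hωA).1
    have h2 := (hBprop ω hωB).1
    have h3 : X ω = 0 := hωA.1
    rw [h3] at h2
    linarith
  -- choose the perturbation size via hu'_zero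
  have hPAne : P A ≠ ⊤ := measure_ne_top P A
  have hPBne : P B ≠ ⊤ := measure_ne_top P B
  have hPAt : 0 < (P A).toReal := ENNReal.toReal_pos hnA hPAne
  have hPBt : 0 < (P B).toReal := ENNReal.toReal_pos hnB hPBne
  set tb : ℝ := (η^2/2) * (P B).toReal / (P A).toReal / η with htbdef
  have htb : 0 < tb := by rw [htbdef]; positivity
  have hevK : ∀ᶠ s in nhdsWithin (0:ℝ) (Set.Ioi 0), M * u' (η/2) / η < u' s :=
    hu'_zero.eventually_gt_atTop _
  have hev2 : ∀ᶠ s in nhdsWithin (0:ℝ) (Set.Ioi 0), s ∈ Set.Ioo (0:ℝ) tb :=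
    eventually_of_mem (Ioo_mem_nhdsGT_of_mem ⟨le_refl 0, htb⟩) (fun x hx => hx)
  obtain ⟨t, htK, ht0, httb⟩ := (hevK.and hev2).exists
  set ε : ℝ := t * η with hεdef
  have hε : 0 < ε := mul_pos ht0 hη
  set δ : ℝ := ε * (P A).toReal / (P B).toReal with hδdef
  have hδ : 0 < δ := by rw [hδdef]; positivity
  have htε : ε / η = t := by rw [hεdef]; field_simp
  have hδsmall : δ ≤ η^2/2 := by
    rw [hδdef, div_le_iff₀ hPBt]
    have e1 : tb * η = η^2/2 * (P B).toReal / (P A).toReal := by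
      rw [htbdef]; field_simp
    have h2 : ε ≤ η^2/2 * (P B).toReal / (P A).toReal := by
      rw [hεdef, ← e1]
      exact mul_le_mul_of_nonneg_right (le_of_lt httb) (le_of_lt hη)
    calc ε * (P A).toReal ≤ (η^2/2 * (P B).toReal / (P A).toReal) * (P A).toReal :=
          mul_le_mul_of_nonneg_right h2 (le_of_lt hPAt)
      _ = η^2/2 * (P B).toReal := by field_simp
  have e2 : δ * (P B).toReal = ε * (P A).toReal := by
    rw [hδdef]; field_simp
  have hεδ : ENNReal.ofReal ε * P A = ENNReal.ofReal δ * P B := by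
    rw [← ENNReal.ofReal_toReal hPAne, ← ENNReal.ofReal_toReal hPBne,
      ← ENNReal.ofReal_mul (le_of_lt hε), ← ENNReal.ofReal_mul (le_of_lt hδ), mul_comm ε, mul_comm δ]
    rw [mul_comm ((P A).toReal) ε, mul_comm ((P B).toReal) δ, e2]
  -- master inequality
  have hmas := master_ineq P ξ X hξmeas hXmeas hX0 u u' hu_meas hu0 hu_nonneg hu_mono hu_conc
    hu_deriv hu'_pos a hbudget hopt hXfin A B hAm hBm hABdisj η hη
    (fun ω hω => ⟨(hAprop ω hω).1, (hAprop ω hω).2.1⟩) hBprop ε δ hε hδ hεδ hδsmall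
  -- lower bound of the A side
  have hGlb : ENNReal.ofReal (u' t * (ε/M)) * P A
      ≤ ∫⁻ ω in A, ENNReal.ofReal (u' (X ω + ε / ξ ω) * (ε / ξ ω)) ∂P := by
    rw [← setLIntegral_const]
    refine setLIntegral_mono' hAm (fun ω hω => ?_)
    obtain ⟨hX0ω, hξη, hξM⟩ := hAprop ω hω
    have hXeq : X ω = 0 := hω.1
    have hξpos : 0 < ξ ω := lt_of_lt_of_le hη hξη
    have h1 : ε / ξ ω ≤ t := by
      rw [← htε]
      exact div_le_div_of_nonneg_left (le_of_lt hε) hη hξη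
    have h2 : ε / M ≤ ε / ξ ω :=
      div_le_div_of_nonneg_left (le_of_lt hε) hξpos hξM
    have h3 : 0 < ε / ξ ω := div_pos hε hξpos
    have h4 : u' t ≤ u' (ε / ξ ω) := uprime_anti hu_conc hu_deriv h3 h1
    refine ENNReal.ofReal_le_ofReal ?_
    rw [hXeq, zero_add]
    refine mul_le_mul h4 h2 (by positivity) (le_of_lt (hu'_pos _ h3))
  -- upper bound of the B side
  have hLub : ∫⁻ ω in B, ENNReal.ofReal (u' (X ω - δ / ξ ω) * (δ / ξ ω)) ∂P
      ≤ ENNReal.ofReal (u' (η/2) * (δ/η)) * P B := by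
    rw [← setLIntegral_const]
    refine setLIntegral_mono' hBm (fun ω hω => ?_)
    obtain ⟨hXη, hξη⟩ := hBprop ω hω
    have hξpos : 0 < ξ ω := lt_of_lt_of_le hη hξη
    have hd : δ / ξ ω ≤ δ / η := div_le_div_of_nonneg_left (le_of_lt hδ) hη hξη
    have hd2 : δ / η ≤ η / 2 := by
      rw [div_le_div_iff₀ hη (by norm_num : (0:ℝ) < 2)]
      nlinarith
    have hdpos : 0 < δ / ξ ω := div_pos hδ hξpos
    have hargpos : 0 < X ω - δ / ξ ω := by nlinarith
    have harg : η/2 ≤ X ω - δ / ξ ω := by nlinarith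
    have h4 : u' (X ω - δ / ξ ω) ≤ u' (η/2) :=
      uprime_anti hu_conc hu_deriv (by linarith) harg
    refine ENNReal.ofReal_le_ofReal ?_
    refine mul_le_mul h4 (le_trans hd (le_refl _)) (le_of_lt hdpos) (le_of_lt (hu'_pos _ (by linarith)))
  -- combine and convert to reals
  have hchain : ENNReal.ofReal (u' t * (ε/M)) * P A ≤ ENNReal.ofReal (u' (η/2) * (δ/η)) * P B :=
    le_trans hGlb (le_trans hmas hLub)
  have hne2 : ENNReal.ofReal (u' (η/2) * (δ/η)) * P B ≠ ⊤ :=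
    ENNReal.mul_ne_top ENNReal.ofReal_ne_top hPBne
  have hreal := ENNReal.toReal_mono hne2 hchain
  have hnn1 : 0 ≤ u' t * (ε/M) := by
    have := hu'_pos t ht0
    positivity
  have hnn2 : 0 ≤ u' (η/2) * (δ/η) := by
    have := hu'_pos (η/2) (by linarith)
    positivity
  rw [ENNReal.toReal_mul, ENNReal.toReal_mul, ENNReal.toReal_ofReal hnn1,
    ENNReal.toReal_ofReal hnn2] at hreal
  -- derive the contradiction
  have h5 : u' t / M * (ε * (P A).toReal) ≤ u' (η/2) / η * (ε * (P A).toReal) := by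
    calc u' t / M * (ε * (P A).toReal) = u' t * (ε/M) * (P A).toReal := by ring
      _ ≤ u' (η/2) * (δ/η) * (P B).toReal := hreal
      _ = u' (η/2) / η * (δ * (P B).toReal) := by ring
      _ = u' (η/2) / η * (ε * (P A).toReal) := by rw [e2]
  have h6 : u' t / M ≤ u' (η/2) / η :=
    le_of_mul_le_mul_right (by
      calc u' t / M * (ε * (P A).toReal) ≤ _ := h5) (mul_pos hε hPAt)
  rw [div_le_div_iff₀ hMpos hη] at h6
  rw [div_lt_iff₀ hη] at htK
  nlinarith

lemma exists_pos_subset {Ω : Type*} [MeasurableSpace Ω] (P : Measure Ω)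
    (ξ X : Ω → ℝ) (hξpos : ∀ᵐ ω ∂P, 0 < ξ ω) (hXpos : ∀ᵐ ω ∂P, 0 < X ω)
    (S : Set Ω) (hS : P S ≠ 0) :
    ∃ n : ℕ, P (S ∩ {ω | 1/((n:ℝ)+1) ≤ X ω ∧ 1/((n:ℝ)+1) ≤ ξ ω}) ≠ 0 := by
  by_contra hno
  push_neg at hno
  apply hS
  have hsub : S ⊆ (⋃ n : ℕ, S ∩ {ω | 1/((n:ℝ)+1) ≤ X ω ∧ 1/((n:ℝ)+1) ≤ ξ ω})
      ∪ ({ω | ¬ 0 < X ω} ∪ {ω | ¬ 0 < ξ ω}) := by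
    intro ω hω
    by_cases hX : 0 < X ω
    · by_cases hξ : 0 < ξ ω
      · left
        obtain ⟨n, hn⟩ := exists_nat_gt (max (1/X ω) (1/ξ ω))
        refine Set.mem_iUnion.2 ⟨n, hω, ?_, ?_⟩
        · have h3 : 1/X ω < (n:ℝ)+1 := by
            have := le_max_left (1/X ω) (1/ξ ω); linarith
          rw [div_le_iff₀ (by positivity : (0:ℝ) < (n:ℝ)+1)]
          rw [div_lt_iff₀ hX] at h3
          nlinarith
        · have h3 : 1/ξ ω < (n:ℝ)+1 := by
            have := le_max_right (1/X ω) (1/ξ ω); linarith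
          rw [div_le_iff₀ (by positivity : (0:ℝ) < (n:ℝ)+1)]
          rw [div_lt_iff₀ hξ] at h3
          nlinarith
      · exact Or.inr (Or.inr hξ)
    · exact Or.inr (Or.inl hX)
  refine measure_mono_null hsub ?_
  refine measure_union_null (measure_iUnion_null hno) ?_
  exact measure_union_null (ae_iff.mp hXpos) (ae_iff.mp hξpos)

theorem lagrange_necessity
    {Ω : Type*} [MeasurableSpace Ω] (P : Measure Ω) [IsProbabilityMeasure P]
    (ξ : Ω → ℝ) (hξmeas : Measurable ξ) (hξpos : ∀ᵐ ω ∂P, 0 < ξ ω)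
    (u u' u'' : ℝ → ℝ) (hu_meas : Measurable u)
    (hu0 : u 0 = 0) (hu_nonneg : ∀ x : ℝ, 0 ≤ x → 0 ≤ u x)
    (hu_mono : StrictMonoOn u (Set.Ici (0:ℝ)))
    (hu_conc : StrictConcaveOn ℝ (Set.Ici (0:ℝ)) u)
    (hu_deriv : ∀ x : ℝ, 0 < x → HasDerivAt u (u' x) x)
    (hu_deriv2 : ∀ x : ℝ, 0 < x → HasDerivAt u' (u'' x) x)
    (hu'_pos : ∀ x : ℝ, 0 < x → 0 < u' x)
    (hu'_zero : Tendsto u' (nhdsWithin 0 (Set.Ioi 0)) atTop)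
    (hu'_top : Tendsto u' atTop (nhds 0))
    (I : ℝ → ℝ) (hI_meas : Measurable I) (hI_pos : ∀ y : ℝ, 0 < y → 0 < I y)
    (hI_left : ∀ x : ℝ, 0 < x → I (u' x) = x)
    (hI_right : ∀ y : ℝ, 0 < y → u' (I y) = y)
    (a : ℝ) (ha : 0 < a) (X : Ω → ℝ)
    (hXopt : IsOptimal P ξ u a X)
    (hXfin : ∫⁻ ω, ENNReal.ofReal (u (X ω)) ∂P < ⊤)
    :
    ∃ lam : ℝ, 0 < lam ∧ X =ᵐ[P] fun ω => I (lam * ξ ω) := by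
  classical
  obtain ⟨hXmeas, hX0, hbudget, hopt⟩ := hXopt
  have hXpos : ∀ᵐ ω ∂P, 0 < X ω :=
    X_pos_ae P ξ X hξmeas hXmeas hξpos hX0 u u' hu_meas hu0 hu_nonneg hu_mono hu_conc
      hu_deriv hu'_pos hu'_zero a ha hbudget hopt hXfin
  set v : ℝ → ℝ := deriv u with hvdef
  have hv : ∀ x : ℝ, 0 < x → v x = u' x := fun x hx => (hu_deriv x hx).deriv
  have hvmeas : Measurable v := measurable_deriv u
  set Z : Ω → ℝ := fun ω => v (X ω) / ξ ω with hZdef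
  have hZmeas : Measurable Z := (hvmeas.comp hXmeas).div hξmeas
  have hZpos : ∀ᵐ ω ∂P, 0 < Z ω := by
    filter_upwards [hXpos, hξpos] with ω h1 h2
    have h3 : v (X ω) = u' (X ω) := hv _ h1
    have h4 : 0 < u' (X ω) := hu'_pos _ h1
    rw [hZdef]
    simp only
    rw [h3]
    exact div_pos h4 h2
  -- Z is a.s. constant
  have hconst : ∃ lam : ℝ, 0 < lam ∧ Z =ᵐ[P] (fun _ => lam) := by
    by_contra hnc
    obtain ⟨c, d, hc, hcd, hPc, hPd⟩ := exists_gap P Z hZpos hnc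
    obtain ⟨nA, hnA⟩ := exists_pos_subset P ξ X hξpos hXpos {ω | d ≤ Z ω} hPd
    obtain ⟨nB, hnB⟩ := exists_pos_subset P ξ X hξpos hXpos {ω | Z ω ≤ c} hPc
    set N : ℕ := max nA nB with hNdef
    set η : ℝ := 1 / ((N:ℝ)+1) with hηdef
    have hη : 0 < η := by rw [hηdef]; positivity
    set A : Set Ω := {ω | d ≤ Z ω} ∩ {ω | 1/((nA:ℝ)+1) ≤ X ω ∧ 1/((nA:ℝ)+1) ≤ ξ ω} with hAdef
    set B : Set Ω := {ω | Z ω ≤ c} ∩ {ω | 1/((nB:ℝ)+1) ≤ X ω ∧ 1/((nB:ℝ)+1) ≤ ξ ω} with hBdef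
    have hAm : MeasurableSet A :=
      (measurableSet_le measurable_const hZmeas).inter
        ((measurableSet_le measurable_const hXmeas).inter
          (measurableSet_le measurable_const hξmeas))
    have hBm : MeasurableSet B :=
      (measurableSet_le hZmeas measurable_const).inter
        ((measurableSet_le measurable_const hXmeas).inter
          (measurableSet_le measurable_const hξmeas))
    have hABdisj : Disjoint A B := by
      rw [Set.disjoint_left]
      intro ω hωA hωB
      have h1 : d ≤ Z ω := hωA.1
      have h2 : Z ω ≤ c := hωB.1
      linarith
    have hηA : η ≤ 1/((nA:ℝ)+1) := by
      rw [hηdef]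
      refine div_le_div_of_nonneg_left (by norm_num) (by positivity) ?_
      have : (nA:ℕ) ≤ N := le_max_left _ _
      exact_mod_cast add_le_add_left (Nat.cast_le.mpr this) 1
    have hηB : η ≤ 1/((nB:ℝ)+1) := by
      rw [hηdef]
      refine div_le_div_of_nonneg_left (by norm_num) (by positivity) ?_
      have : (nB:ℕ) ≤ N := le_max_right _ _
      exact_mod_cast add_le_add_left (Nat.cast_le.mpr this) 1
    have hAprop : ∀ ω ∈ A, η ≤ X ω ∧ η ≤ ξ ω :=
      fun ω hω => ⟨le_trans hηA hω.2.1, le_trans hηA hω.2.2⟩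
    have hBprop : ∀ ω ∈ B, η ≤ X ω ∧ η ≤ ξ ω :=
      fun ω hω => ⟨le_trans hηB hω.2.1, le_trans hηB hω.2.2⟩
    have hstar := star_ineq P ξ X hξmeas hXmeas hX0 u u' u'' hu_meas hu0 hu_nonneg hu_mono
      hu_conc hu_deriv hu_deriv2 hu'_pos a hbudget hopt hXfin A B hAm hBm hABdisj η hη
      hAprop hBprop hnA hnB
    -- bound both sides
    have hIA : ENNReal.ofReal d * P A ≤ ∫⁻ ω in A, ENNReal.ofReal (u' (X ω) / ξ ω) ∂P := by
      rw [← setLIntegral_const]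
      refine setLIntegral_mono' hAm (fun ω hω => ?_)
      refine ENNReal.ofReal_le_ofReal ?_
      have hXp : 0 < X ω := lt_of_lt_of_le hη (hAprop ω hω).1
      have h1 : d ≤ Z ω := hω.1
      rw [hZdef] at h1
      simp only at h1
      rw [hv _ hXp] at h1
      exact h1
    have hIB : ∫⁻ ω in B, ENNReal.ofReal (u' (X ω) / ξ ω) ∂P ≤ ENNReal.ofReal c * P B := by
      rw [← setLIntegral_const]
      refine setLIntegral_mono' hBm (fun ω hω => ?_)
      refine ENNReal.ofReal_le_ofReal ?_
      have hXp : 0 < X ω := lt_of_lt_of_le hη (hBprop ω hω).1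
      have h1 : Z ω ≤ c := hω.1
      rw [hZdef] at h1
      simp only at h1
      rw [hv _ hXp] at h1
      exact h1
    have hchain : ENNReal.ofReal d * (P A * P B) ≤ ENNReal.ofReal c * (P A * P B) := by
      calc ENNReal.ofReal d * (P A * P B) = P B * (ENNReal.ofReal d * P A) := by ring
        _ ≤ P B * ∫⁻ ω in A, ENNReal.ofReal (u' (X ω) / ξ ω) ∂P :=
            mul_le_mul_right hIA _
        _ ≤ P A * ∫⁻ ω in B, ENNReal.ofReal (u' (X ω) / ξ ω) ∂P := hstar
        _ ≤ P A * (ENNReal.ofReal c * P B) := mul_le_mul_right hIB _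
        _ = ENNReal.ofReal c * (P A * P B) := by ring
    have hPABne : P A * P B ≠ 0 := mul_ne_zero hnA hnB
    have hPABnetop : P A * P B ≠ ⊤ :=
      ENNReal.mul_ne_top (measure_ne_top P A) (measure_ne_top P B)
    have hdc : ENNReal.ofReal d ≤ ENNReal.ofReal c :=
      (ENNReal.mul_le_mul_iff_left hPABne hPABnetop).mp hchain
    rw [ENNReal.ofReal_le_ofReal_iff (le_of_lt hc)] at hdc
    linarith
  obtain ⟨lam, hlam, hZconst⟩ := hconst
  refine ⟨lam, hlam, ?_⟩
  filter_upwards [hXpos, hξpos, hZconst] with ω h1 h2 h3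
  have h4 : v (X ω) / ξ ω = lam := h3
  rw [hv _ h1] at h4
  have h5 : u' (X ω) = lam * ξ ω := by
    field_simp at h4
    linarith [h4]
  have h6 : I (lam * ξ ω) = X ω := by
    rw [← h5]
    exact hI_left _ h1
  exact h6.symm
end

section
/- Sufficiency part of the Lagrange method: if λ>0 satisfies E[I(λξ)ξ]=a<+∞ and E[u(I(λξ))]<+∞, then X*=I(λξ) is an optimal solution of Problem (P_a) with parameter a, and it is the unique optimal solution up to almost sure equality. -/
open MeasureTheory Filter Set
open scoped ENNReal

/-- Strict tangent line inequality for a strictly concave function. -/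
lemma tangent_lt_aux {u : ℝ → ℝ} (hu_conc : StrictConcaveOn ℝ (Set.Ici (0:ℝ)) u)
    {x c y : ℝ} (hx : 0 < x) (hd : HasDerivAt u c x) (hy : 0 ≤ y) (hne : y ≠ x) :
    u y < u x + c * (y - x) := by
  rcases hne.lt_or_gt with h | h
  · have hs := hu_conc.lt_slope_of_hasDerivAt (Set.mem_Ici.mpr hy)
      (Set.mem_Ici.mpr hx.le) h hd
    rw [slope_def_field] at hs
    have hxy : (0:ℝ) < x - y := by linarith
    have h2 := (lt_div_iff₀ hxy).mp hs
    nlinarith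
  · have hs := hu_conc.slope_lt_of_hasDerivAt (Set.mem_Ici.mpr hx.le)
      (Set.mem_Ici.mpr hy) h hd
    rw [slope_def_field] at hs
    have hxy : (0:ℝ) < y - x := by linarith
    have h2 := (div_lt_iff₀ hxy).mp hs
    nlinarith

theorem lagrange_sufficiency
    {Ω : Type*} [MeasurableSpace Ω] (P : Measure Ω) [IsProbabilityMeasure P]
    (ξ : Ω → ℝ) (hξmeas : Measurable ξ) (hξpos : ∀ᵐ ω ∂P, 0 < ξ ω)
    (u u' u'' : ℝ → ℝ) (hu_meas : Measurable u)
    (hu0 : u 0 = 0) (hu_nonneg : ∀ x : ℝ, 0 ≤ x → 0 ≤ u x)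
    (hu_mono : StrictMonoOn u (Set.Ici (0:ℝ)))
    (hu_conc : StrictConcaveOn ℝ (Set.Ici (0:ℝ)) u)
    (hu_deriv : ∀ x : ℝ, 0 < x → HasDerivAt u (u' x) x)
    (hu_deriv2 : ∀ x : ℝ, 0 < x → HasDerivAt u' (u'' x) x)
    (hu'_pos : ∀ x : ℝ, 0 < x → 0 < u' x)
    (hu'_zero : Tendsto u' (nhdsWithin 0 (Set.Ioi 0)) atTop)
    (hu'_top : Tendsto u' atTop (nhds 0))
    (I : ℝ → ℝ) (hI_meas : Measurable I) (hI_pos : ∀ y : ℝ, 0 < y → 0 < I y)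
    (hI_left : ∀ x : ℝ, 0 < x → I (u' x) = x)
    (hI_right : ∀ y : ℝ, 0 < y → u' (I y) = y)
    (a : ℝ) (ha : 0 < a) (lam : ℝ) (hlam : 0 < lam)
    (hbudget : fLag P ξ I lam = ENNReal.ofReal a)
    (hfin : ∫⁻ ω, ENNReal.ofReal (u (I (lam * ξ ω))) ∂P < ⊤)
    :
    IsOptimal P ξ u a (fun ω => I (lam * ξ ω)) ∧
      ∀ Y : Ω → ℝ, IsOptimal P ξ u a Y → Y =ᵐ[P] fun ω => I (lam * ξ ω) := by

  classical
  set L := ENNReal.ofReal lam with hLdef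
  set A := ENNReal.ofReal a with hAdef
  set Xs : Ω → ℝ := fun ω => I (lam * ξ ω) with hXsdef
  have hXsm : Measurable Xs := hI_meas.comp (hξmeas.const_mul lam)
  have hXspos : ∀ᵐ ω ∂P, 0 < Xs ω ∧ u' (Xs ω) = lam * ξ ω := by
    filter_upwards [hξpos] with ω hω
    have h1 : 0 < lam * ξ ω := mul_pos hlam hω
    exact ⟨hI_pos _ h1, hI_right _ h1⟩
  have hXsnn : ∀ᵐ ω ∂P, 0 ≤ Xs ω := by
    filter_upwards [hXspos] with ω hω using hω.1.le
  have hbudgetXs : ∫⁻ ω, ENNReal.ofReal (Xs ω * ξ ω) ∂P = A := hbudget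
  -- pointwise real inequality coming from the tangent line
  have hreal : ∀ᵐ ω ∂P, ∀ y : ℝ, 0 ≤ y →
      (u y + lam * (Xs ω * ξ ω) ≤ u (Xs ω) + lam * (y * ξ ω)) ∧
      (y ≠ Xs ω → u y + lam * (Xs ω * ξ ω) < u (Xs ω) + lam * (y * ξ ω)) := by
    filter_upwards [hXspos, hξpos] with ω hω hξω
    obtain ⟨hxpos, hderiv⟩ := hω
    intro y hy
    have hd : HasDerivAt u (lam * ξ ω) (Xs ω) := hderiv ▸ hu_deriv _ hxpos
    have hid : lam * ξ ω * (y - Xs ω) = lam * (y * ξ ω) - lam * (Xs ω * ξ ω) := by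
      ring
    have hstrict : y ≠ Xs ω →
        u y + lam * (Xs ω * ξ ω) < u (Xs ω) + lam * (y * ξ ω) := by
      intro hne
      have := tangent_lt_aux hu_conc hxpos hd hy hne
      linarith
    refine ⟨?_, hstrict⟩
    rcases eq_or_ne y (Xs ω) with rfl | hne
    · exact le_refl _
    · exact (hstrict hne).le
  -- pointwise ENNReal inequality for any feasible Y
  have hptY : ∀ Y : Ω → ℝ, (∀ᵐ ω ∂P, 0 ≤ Y ω) → ∀ᵐ ω ∂P,
      ENNReal.ofReal (u (Y ω)) + L * ENNReal.ofReal (Xs ω * ξ ω)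
        ≤ ENNReal.ofReal (u (Xs ω)) + L * ENNReal.ofReal (Y ω * ξ ω) := by
    intro Y hYnn
    filter_upwards [hreal, hYnn, hXspos, hξpos] with ω hr hYω hXω hξω
    have h1 := (hr (Y ω) hYω).1
    have hnn1 : 0 ≤ u (Y ω) := hu_nonneg _ hYω
    have hnn2 : 0 ≤ lam * (Xs ω * ξ ω) :=
      mul_nonneg hlam.le (mul_nonneg hXω.1.le hξω.le)
    have hnn3 : 0 ≤ u (Xs ω) := hu_nonneg _ hXω.1.le
    have hnn4 : 0 ≤ lam * (Y ω * ξ ω) :=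
      mul_nonneg hlam.le (mul_nonneg hYω hξω.le)
    have e1 := ENNReal.ofReal_le_ofReal h1
    rwa [ENNReal.ofReal_add hnn1 hnn2, ENNReal.ofReal_add hnn3 hnn4,
      ENNReal.ofReal_mul hlam.le, ENNReal.ofReal_mul hlam.le] at e1
  -- splitting the integral
  have hint : ∀ Y Z : Ω → ℝ, Measurable Y → Measurable Z →
      ∫⁻ ω, (ENNReal.ofReal (u (Y ω)) + L * ENNReal.ofReal (Z ω * ξ ω)) ∂P
        = ∫⁻ ω, ENNReal.ofReal (u (Y ω)) ∂P
          + L * ∫⁻ ω, ENNReal.ofReal (Z ω * ξ ω) ∂P := by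
    intro Y Z hY hZ
    have m1 : Measurable fun ω => ENNReal.ofReal (u (Y ω)) :=
      (hu_meas.comp hY).ennreal_ofReal
    have m2 : Measurable fun ω => ENNReal.ofReal (Z ω * ξ ω) :=
      (hZ.mul hξmeas).ennreal_ofReal
    rw [lintegral_add_left m1, lintegral_const_mul L m2]
  have hLA_ne : L * A ≠ ⊤ :=
    ENNReal.mul_ne_top ENNReal.ofReal_ne_top ENNReal.ofReal_ne_top
  -- main optimality estimate
  have hopt : ∀ Y : Ω → ℝ, Measurable Y → (∀ᵐ ω ∂P, 0 ≤ Y ω) →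
      (∫⁻ ω, ENNReal.ofReal (Y ω * ξ ω) ∂P = A) →
      ∫⁻ ω, ENNReal.ofReal (u (Y ω)) ∂P ≤ ∫⁻ ω, ENNReal.ofReal (u (Xs ω)) ∂P := by
    intro Y hYm hYnn hYb
    have h1 := lintegral_mono_ae (hptY Y hYnn)
    rw [hint Y Xs hYm hXsm, hint Xs Y hXsm hYm, hbudgetXs, hYb] at h1
    exact (ENNReal.add_le_add_iff_right hLA_ne).mp h1
  refine ⟨⟨hXsm, hXsnn, hbudgetXs, hopt⟩, ?_⟩
  -- uniqueness
  intro Y hY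
  obtain ⟨hYm, hYnn, hYb, hYopt⟩ := hY
  have h1 : ∫⁻ ω, ENNReal.ofReal (u (Y ω)) ∂P
      ≤ ∫⁻ ω, ENNReal.ofReal (u (Xs ω)) ∂P := hopt Y hYm hYnn hYb
  have h2 : ∫⁻ ω, ENNReal.ofReal (u (Xs ω)) ∂P
      ≤ ∫⁻ ω, ENNReal.ofReal (u (Y ω)) ∂P := hYopt Xs hXsm hXsnn hbudgetXs
  have heq : ∫⁻ ω, ENNReal.ofReal (u (Y ω)) ∂P
      = ∫⁻ ω, ENNReal.ofReal (u (Xs ω)) ∂P := le_antisymm h1 h2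
  set F : Ω → ℝ≥0∞ := fun ω =>
    ENNReal.ofReal (u (Y ω)) + L * ENNReal.ofReal (Xs ω * ξ ω) with hFdef
  set G : Ω → ℝ≥0∞ := fun ω =>
    ENNReal.ofReal (u (Xs ω)) + L * ENNReal.ofReal (Y ω * ξ ω) with hGdef
  have hFm : Measurable F :=
    ((hu_meas.comp hYm).ennreal_ofReal).add
      ((measurable_const).mul ((hXsm.mul hξmeas).ennreal_ofReal))
  have hGm : Measurable G :=
    ((hu_meas.comp hXsm).ennreal_ofReal).add
      ((measurable_const).mul ((hYm.mul hξmeas).ennreal_ofReal))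
  have hFG : ∀ᵐ ω ∂P, F ω ≤ G ω := hptY Y hYnn
  have hIF : ∫⁻ ω, F ω ∂P = ∫⁻ ω, ENNReal.ofReal (u (Y ω)) ∂P + L * A := by
    rw [hFdef, hint Y Xs hYm hXsm, hbudgetXs]
  have hIG : ∫⁻ ω, G ω ∂P = ∫⁻ ω, ENNReal.ofReal (u (Xs ω)) ∂P + L * A := by
    rw [hGdef, hint Xs Y hXsm hYm, hYb]
  have hIFG : ∫⁻ ω, F ω ∂P = ∫⁻ ω, G ω ∂P := by rw [hIF, hIG, heq]
  have hFfin : ∫⁻ ω, F ω ∂P ≠ ⊤ := by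
    rw [hIF, heq]
    exact ENNReal.add_ne_top.mpr ⟨hfin.ne, hLA_ne⟩
  have hsub : ∫⁻ ω, (G ω - F ω) ∂P = 0 := by
    rw [lintegral_sub hFm hFfin hFG, hIFG, tsub_self]
  have hzero : ∀ᵐ ω ∂P, G ω - F ω = 0 :=
    (lintegral_eq_zero_iff (hGm.sub hFm)).mp hsub
  have hGF : ∀ᵐ ω ∂P, G ω = F ω := by
    filter_upwards [hzero, hFG] with ω h0 hle
    exact le_antisymm (tsub_eq_zero_iff_le.mp h0) hle
  filter_upwards [hGF, hreal, hYnn, hXspos, hξpos] with ω hGFω hr hYω hXω hξω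
  by_contra hne
  have hnn1 : 0 ≤ u (Y ω) := hu_nonneg _ hYω
  have hnn2 : 0 ≤ lam * (Xs ω * ξ ω) :=
    mul_nonneg hlam.le (mul_nonneg hXω.1.le hξω.le)
  have hnn3 : 0 ≤ u (Xs ω) := hu_nonneg _ hXω.1.le
  have hnn4 : 0 ≤ lam * (Y ω * ξ ω) :=
    mul_nonneg hlam.le (mul_nonneg hYω hξω.le)
  have hGF' : ENNReal.ofReal (u (Xs ω) + lam * (Y ω * ξ ω))
      = ENNReal.ofReal (u (Y ω) + lam * (Xs ω * ξ ω)) := by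
    rw [ENNReal.ofReal_add hnn3 hnn4, ENNReal.ofReal_add hnn1 hnn2,
      ENNReal.ofReal_mul hlam.le, ENNReal.ofReal_mul hlam.le]
    exact hGFω
  have hrealeq : u (Xs ω) + lam * (Y ω * ξ ω) = u (Y ω) + lam * (Xs ω * ξ ω) :=
    (ENNReal.ofReal_eq_ofReal_iff (by linarith) (by linarith)).mp hGF'
  have hstrict := (hr (Y ω) hYω).2 hne
  linarith
end

section
/- If f(λ₀)<+∞ for some λ₀>0, then f is continuous on (λ₀,+∞), right continuous at λ₀, and lim_{λ→+∞} f(λ)=0. -/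
open MeasureTheory Filter Set
open scoped ENNReal

theorem f_continuity
    {Ω : Type*} [MeasurableSpace Ω] (P : Measure Ω) [IsProbabilityMeasure P]
    (ξ : Ω → ℝ) (hξmeas : Measurable ξ) (hξpos : ∀ᵐ ω ∂P, 0 < ξ ω)
    (u u' u'' : ℝ → ℝ) (hu_meas : Measurable u)
    (hu0 : u 0 = 0) (hu_nonneg : ∀ x : ℝ, 0 ≤ x → 0 ≤ u x)
    (hu_mono : StrictMonoOn u (Set.Ici (0:ℝ)))
    (hu_conc : StrictConcaveOn ℝ (Set.Ici (0:ℝ)) u)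
    (hu_deriv : ∀ x : ℝ, 0 < x → HasDerivAt u (u' x) x)
    (hu_deriv2 : ∀ x : ℝ, 0 < x → HasDerivAt u' (u'' x) x)
    (hu'_pos : ∀ x : ℝ, 0 < x → 0 < u' x)
    (hu'_zero : Tendsto u' (nhdsWithin 0 (Set.Ioi 0)) atTop)
    (hu'_top : Tendsto u' atTop (nhds 0))
    (I : ℝ → ℝ) (hI_meas : Measurable I) (hI_pos : ∀ y : ℝ, 0 < y → 0 < I y)
    (hI_left : ∀ x : ℝ, 0 < x → I (u' x) = x)
    (hI_right : ∀ y : ℝ, 0 < y → u' (I y) = y)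
    (lam0 : ℝ) (hlam0 : 0 < lam0) (hfin : fLag P ξ I lam0 < ⊤)
    :
    ContinuousOn (fLag P ξ I) (Set.Ioi lam0) ∧
      ContinuousWithinAt (fLag P ξ I) (Set.Ici lam0) lam0 ∧
      Tendsto (fLag P ξ I) atTop (nhds 0) := by
  -- u' is strictly antitone on (0, ∞)
  have hu'anti : ∀ x y : ℝ, 0 < x → x < y → u' y < u' x := by
    intro x y hx hxy
    have hy : 0 < y := hx.trans hxy
    have h1 := hu_conc.lt_slope_of_hasDerivAt (le_of_lt hx) (le_of_lt hy) hxy (hu_deriv y hy)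
    have h2 := hu_conc.slope_lt_of_hasDerivAt (le_of_lt hx) (le_of_lt hy) hxy (hu_deriv x hx)
    exact h1.trans h2
  -- I is strictly antitone on (0, ∞)
  have hIanti : ∀ y₁ y₂ : ℝ, 0 < y₁ → y₁ < y₂ → I y₂ < I y₁ := by
    intro y₁ y₂ hy₁ h12
    have hy₂ : 0 < y₂ := hy₁.trans h12
    by_contra hcon
    push_neg at hcon
    rcases lt_or_eq_of_le hcon with h | h
    · have := hu'anti _ _ (hI_pos _ hy₁) h
      rw [hI_right _ hy₁, hI_right _ hy₂] at this
      exact absurd h12 (not_lt.2 this.le)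
    · have : y₂ = y₁ := by
        rw [← hI_right _ hy₂, ← hI_right _ hy₁, h]
      exact absurd this (ne_of_gt h12)
  have hImono : ∀ y₁ y₂ : ℝ, 0 < y₁ → y₁ ≤ y₂ → I y₂ ≤ I y₁ := by
    intro y₁ y₂ hy₁ h12
    rcases eq_or_lt_of_le h12 with h | h
    · rw [h]
    · exact (hIanti _ _ hy₁ h).le
  -- I is continuous at every positive point
  have hIcont : ∀ y : ℝ, 0 < y → ContinuousAt I y := by
    intro y hy
    have hmono : StrictMonoOn (fun z => -I z) (Set.Ioi (0:ℝ)) := by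
      intro a ha b hb hab
      simpa using hIanti a b ha hab
    have himg : (fun z => -I z) '' Set.Ioi (0:ℝ) ∈ nhds (-I y) := by
      refine Filter.mem_of_superset (Iio_mem_nhds (neg_lt_zero.2 (hI_pos y hy))) ?_
      intro z hz
      refine ⟨u' (-z), hu'_pos _ (by simpa using hz), ?_⟩
      simp [hI_left _ (by simpa using hz : (0:ℝ) < -z)]
    have hcont : ContinuousAt (fun z => -I z) y :=
      hmono.continuousAt_of_image_mem_nhds (Ioi_mem_nhds hy) himg
    have : ContinuousAt (fun z => -(-I z)) y := hcont.neg
    simpa using this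
  -- measurability of the integrands
  have hFmeas : ∀ lam : ℝ, Measurable (fun ω => ENNReal.ofReal (I (lam * ξ ω) * ξ ω)) := by
    intro lam
    exact ((hI_meas.comp (hξmeas.const_mul lam)).mul hξmeas).ennreal_ofReal
  -- domination for lam ≥ lam0
  have hdom : ∀ lam : ℝ, lam0 ≤ lam → ∀ᵐ ω ∂P,
      ENNReal.ofReal (I (lam * ξ ω) * ξ ω) ≤ ENNReal.ofReal (I (lam0 * ξ ω) * ξ ω) := by
    intro lam hlam
    filter_upwards [hξpos] with ω hω
    refine ENNReal.ofReal_le_ofReal ?_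
    refine mul_le_mul_of_nonneg_right ?_ hω.le
    exact hImono _ _ (mul_pos hlam0 hω) (mul_le_mul_of_nonneg_right hlam hω.le)
  have hfin' : (∫⁻ ω, ENNReal.ofReal (I (lam0 * ξ ω) * ξ ω) ∂P) ≠ ⊤ := hfin.ne
  -- continuity within Ici lam0 at every point of Ici lam0
  have key : ∀ lam1 : ℝ, lam0 ≤ lam1 →
      ContinuousWithinAt (fLag P ξ I) (Set.Ici lam0) lam1 := by
    intro lam1 hlam1
    have hlam1pos : 0 < lam1 := hlam0.trans_le hlam1
    unfold ContinuousWithinAt fLag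
    refine tendsto_lintegral_filter_of_dominated_convergence
      (fun ω => ENNReal.ofReal (I (lam0 * ξ ω) * ξ ω))
      (Filter.Eventually.of_forall fun lam => hFmeas lam) ?_ hfin' ?_
    · filter_upwards [self_mem_nhdsWithin] with lam hlam
      exact hdom lam hlam
    · filter_upwards [hξpos] with ω hω
      have hc : ContinuousAt (fun lam : ℝ => ENNReal.ofReal (I (lam * ξ ω) * ξ ω)) lam1 := by
        refine ENNReal.continuous_ofReal.continuousAt.comp ?_
        refine ContinuousAt.mul ?_ continuousAt_const
        refine ContinuousAt.comp ?_ ((continuous_mul_right (ξ ω)).continuousAt)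
        exact hIcont _ (mul_pos hlam1pos hω)
      exact hc.continuousWithinAt
  refine ⟨?_, key lam0 le_rfl, ?_⟩
  · intro lam hlam
    exact (key lam (le_of_lt hlam)).mono Set.Ioi_subset_Ici_self
  · -- limit at +∞ is 0
    have h0 : (0 : ℝ≥0∞) = ∫⁻ _, (0 : ℝ≥0∞) ∂P := by simp
    rw [h0]
    unfold fLag
    refine tendsto_lintegral_filter_of_dominated_convergence
      (fun ω => ENNReal.ofReal (I (lam0 * ξ ω) * ξ ω))
      (Filter.Eventually.of_forall fun lam => hFmeas lam) ?_ hfin' ?_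
    · filter_upwards [eventually_ge_atTop lam0] with lam hlam
      exact hdom lam hlam
    · filter_upwards [hξpos] with ω hω
      have hreal : Tendsto (fun lam : ℝ => I (lam * ξ ω) * ξ ω) atTop (nhds 0) := by
        have hIto0 : Tendsto (fun lam : ℝ => I (lam * ξ ω)) atTop (nhds 0) := by
          rw [tendsto_order]
          constructor
          · intro a ha
            filter_upwards [eventually_gt_atTop (0:ℝ)] with lam hlam
            exact ha.trans (hI_pos _ (mul_pos hlam hω))
          · intro a ha
            have htop : Tendsto (fun lam : ℝ => lam * ξ ω) atTop atTop :=
              Tendsto.atTop_mul_const hω tendsto_id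
            filter_upwards [htop.eventually_gt_atTop (u' (a/2))] with lam hlam
            have h1 : I (lam * ξ ω) < I (u' (a/2)) :=
              hIanti _ _ (hu'_pos _ (by linarith)) hlam
            rw [hI_left _ (by linarith : (0:ℝ) < a/2)] at h1
            linarith
        have := hIto0.mul_const (ξ ω)
        simpa using this
      have := (ENNReal.continuous_ofReal.continuousAt (x := (0:ℝ))).tendsto.comp hreal
      simpa [Function.comp_def] using this
end

section
/- If E[I(λξ)ξ]=+∞ for every λ>0, then V(a)=+∞ for every a>0 (i.e., Problem (P_a) is ill-posed for every a>0). -/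
open MeasureTheory Filter Set
open scoped ENNReal

private lemma deriv_le_slope' {u u' : ℝ → ℝ}
    (hu_conc : StrictConcaveOn ℝ (Set.Ici (0:ℝ)) u)
    (hu_deriv : ∀ x : ℝ, 0 < x → HasDerivAt u (u' x) x)
    {x y : ℝ} (hx : 0 ≤ x) (hxy : x < y) :
    u' y ≤ (u y - u x) / (y - x) := by
  have hy : 0 < y := lt_of_le_of_lt hx hxy
  have htend : Tendsto (slope u y) (nhdsWithin y (Set.Ioi y)) (nhds (u' y)) :=
    (hasDerivAt_iff_tendsto_slope.mp (hu_deriv y hy)).mono_left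
      (nhdsWithin_mono _ (fun t ht => ne_of_gt ht))
  refine le_of_tendsto htend ?_
  filter_upwards [self_mem_nhdsWithin] with t ht
  have h1 : (u t - u y) / (t - y) ≤ (u y - u x) / (y - x) :=
    hu_conc.concaveOn.slope_anti_adjacent hx (le_of_lt (hy.trans ht)) hxy ht
  rw [slope_def_field]
  simpa [div_eq_iff] using h1

private lemma slope_le_deriv' {u u' : ℝ → ℝ}
    (hu_conc : StrictConcaveOn ℝ (Set.Ici (0:ℝ)) u)
    (hu_deriv : ∀ x : ℝ, 0 < x → HasDerivAt u (u' x) x)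
    {x y : ℝ} (hx : 0 < x) (hxy : x < y) :
    (u y - u x) / (y - x) ≤ u' x := by
  have htend : Tendsto (slope u x) (nhdsWithin x (Set.Ioi x)) (nhds (u' x)) :=
    (hasDerivAt_iff_tendsto_slope.mp (hu_deriv x hx)).mono_left
      (nhdsWithin_mono _ (fun t ht => ne_of_gt ht))
  refine ge_of_tendsto htend ?_
  filter_upwards [Ioo_mem_nhdsGT_of_mem ⟨le_refl x, hxy⟩] with t ht
  have h1 := hu_conc.secant_strict_mono (a := x) hx.le
    (le_of_lt (hx.trans ht.1)) (le_of_lt (hx.trans hxy)) (ne_of_gt ht.1) (ne_of_gt hxy) ht.2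
  rw [slope_def_field]
  exact h1.le

private lemma deriv_anti' {u u' : ℝ → ℝ}
    (hu_conc : StrictConcaveOn ℝ (Set.Ici (0:ℝ)) u)
    (hu_deriv : ∀ x : ℝ, 0 < x → HasDerivAt u (u' x) x)
    {x y : ℝ} (hx : 0 < x) (hxy : x ≤ y) : u' y ≤ u' x := by
  rcases eq_or_lt_of_le hxy with rfl | h
  · exact le_refl _
  · exact (deriv_le_slope' hu_conc hu_deriv hx.le h).trans (slope_le_deriv' hu_conc hu_deriv hx h)

private lemma mul_deriv_le' {u u' : ℝ → ℝ} (hu0 : u 0 = 0)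
    (hu_conc : StrictConcaveOn ℝ (Set.Ici (0:ℝ)) u)
    (hu_deriv : ∀ x : ℝ, 0 < x → HasDerivAt u (u' x) x)
    {x : ℝ} (hx : 0 < x) : x * u' x ≤ u x := by
  have h := deriv_le_slope' hu_conc hu_deriv (le_refl (0:ℝ)) hx
  rw [hu0, sub_zero, sub_zero] at h
  calc x * u' x ≤ x * (u x / x) := by
        exact mul_le_mul_of_nonneg_left h hx.le
    _ = u x := by field_simp

theorem illposed_of_f_infinite
    {Ω : Type*} [MeasurableSpace Ω] (P : Measure Ω) [IsProbabilityMeasure P]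
    (ξ : Ω → ℝ) (hξmeas : Measurable ξ) (hξpos : ∀ᵐ ω ∂P, 0 < ξ ω)
    (u u' u'' : ℝ → ℝ) (hu_meas : Measurable u)
    (hu0 : u 0 = 0) (hu_nonneg : ∀ x : ℝ, 0 ≤ x → 0 ≤ u x)
    (hu_mono : StrictMonoOn u (Set.Ici (0:ℝ)))
    (hu_conc : StrictConcaveOn ℝ (Set.Ici (0:ℝ)) u)
    (hu_deriv : ∀ x : ℝ, 0 < x → HasDerivAt u (u' x) x)
    (hu_deriv2 : ∀ x : ℝ, 0 < x → HasDerivAt u' (u'' x) x)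
    (hu'_pos : ∀ x : ℝ, 0 < x → 0 < u' x)
    (hu'_zero : Tendsto u' (nhdsWithin 0 (Set.Ioi 0)) atTop)
    (hu'_top : Tendsto u' atTop (nhds 0))
    (I : ℝ → ℝ) (hI_meas : Measurable I) (hI_pos : ∀ y : ℝ, 0 < y → 0 < I y)
    (hI_left : ∀ x : ℝ, 0 < x → I (u' x) = x)
    (hI_right : ∀ y : ℝ, 0 < y → u' (I y) = y)
    (hinf : ∀ lam : ℝ, 0 < lam → fLag P ξ I lam = ⊤)
    :
    ∀ a : ℝ, 0 < a → Vval P ξ u a = ⊤ := by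
  intro a ha
  -- Main step: for every M > 0 there is a feasible X with E[u(X)] ≥ M.
  have key : ∀ M : ℝ, 0 < M → ENNReal.ofReal M ≤ Vval P ξ u a := by
    intro M hM
    set lam : ℝ := M / a with hlam_def
    have hlam : 0 < lam := div_pos hM ha
    -- truncated candidate solutions
    set Xm : ℕ → Ω → ℝ := fun m ω => if ξ ω ≤ (m:ℝ) then min (I (lam * ξ ω)) (m:ℝ) else 0
      with hXm_def
    have hXm_meas : ∀ m : ℕ, Measurable (Xm m) := fun m =>
      Measurable.ite (measurableSet_le hξmeas measurable_const)
        ((hI_meas.comp (measurable_const.mul hξmeas)).min measurable_const) measurable_const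
    set b : ℕ → ℝ≥0∞ := fun m => ∫⁻ ω, ENNReal.ofReal (Xm m ω * ξ ω) ∂P with hb_def
    -- pointwise facts on the a.s. event {ξ > 0}
    have hXm_le : ∀ m : ℕ, ∀ ω, 0 < ξ ω → Xm m ω ≤ I (lam * ξ ω) := by
      intro m ω hω
      by_cases h : ξ ω ≤ (m:ℝ)
      · simp only [hXm_def, if_pos h]; exact min_le_left _ _
      · simp only [hXm_def, if_neg h]; exact (hI_pos _ (by positivity)).le
    have hXm_nonneg : ∀ m : ℕ, ∀ ω, 0 < ξ ω → 0 ≤ Xm m ω := by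
      intro m ω hω
      by_cases h : ξ ω ≤ (m:ℝ)
      · simp only [hXm_def, if_pos h]
        exact le_min (hI_pos _ (by positivity)).le (Nat.cast_nonneg m)
      · simp only [hXm_def, if_neg h]; exact le_refl _
    -- monotone convergence: sup of b is the (infinite) Lagrange integral
    have hmono : ∀ᵐ ω ∂P, Monotone fun m : ℕ => ENNReal.ofReal (Xm m ω * ξ ω) := by
      filter_upwards [hξpos] with ω hω
      intro m n hmn
      apply ENNReal.ofReal_le_ofReal
      apply mul_le_mul_of_nonneg_right _ hω.le
      by_cases h : ξ ω ≤ (m:ℝ)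
      · have h' : ξ ω ≤ (n:ℝ) := h.trans (Nat.cast_le.mpr hmn)
        simp only [hXm_def, if_pos h, if_pos h']
        exact min_le_min (le_refl _) (Nat.cast_le.mpr hmn)
      · simp only [hXm_def, if_neg h]
        exact hXm_nonneg n ω hω
    have hsup_pt : ∀ᵐ ω ∂P,
        (⨆ m : ℕ, ENNReal.ofReal (Xm m ω * ξ ω)) = ENNReal.ofReal (I (lam * ξ ω) * ξ ω) := by
      filter_upwards [hξpos] with ω hω
      apply le_antisymm
      · apply iSup_le; intro m
        exact ENNReal.ofReal_le_ofReal (mul_le_mul_of_nonneg_right (hXm_le m ω hω) hω.le)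
      · have hc : 0 < I (lam * ξ ω) := hI_pos _ (by positivity)
        set m0 : ℕ := ⌈max (ξ ω) (I (lam * ξ ω))⌉₊ with hm0
        have h1 : ξ ω ≤ (m0:ℝ) := le_trans (le_max_left _ _) (Nat.le_ceil _)
        have h2 : I (lam * ξ ω) ≤ (m0:ℝ) := le_trans (le_max_right _ _) (Nat.le_ceil _)
        have : Xm m0 ω = I (lam * ξ ω) := by
          simp only [hXm_def, if_pos h1]; exact min_eq_left h2
        refine le_trans (le_of_eq ?_) (le_iSup _ m0)
        rw [this]
    have hsupb : (⨆ m : ℕ, b m) = ⊤ := by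
      have := lintegral_iSup' (μ := P)
        (f := fun m ω => ENNReal.ofReal (Xm m ω * ξ ω))
        (fun m => ((hXm_meas m).mul hξmeas).ennreal_ofReal.aemeasurable) hmono
      rw [hb_def]
      rw [← this]
      rw [lintegral_congr_ae hsup_pt]
      exact hinf lam hlam
    -- choose m with budget at least a
    have hex : ∃ m, ENNReal.ofReal a < b m := by
      rw [← lt_iSup_iff, hsupb]; exact ENNReal.ofReal_lt_top
    obtain ⟨m, hbm⟩ := hex
    -- the budget b m is finite
    have hbm_top : b m ≠ ⊤ := by
      have hle : b m ≤ ENNReal.ofReal ((m:ℝ) * m) := by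
        rw [hb_def]
        calc ∫⁻ ω, ENNReal.ofReal (Xm m ω * ξ ω) ∂P
            ≤ ∫⁻ _, ENNReal.ofReal ((m:ℝ) * m) ∂P := by
              apply lintegral_mono_ae
              filter_upwards [hξpos] with ω hω
              apply ENNReal.ofReal_le_ofReal
              by_cases h : ξ ω ≤ (m:ℝ)
              · have hx1 : Xm m ω ≤ (m:ℝ) := by
                  simp only [hXm_def, if_pos h]; exact min_le_right _ _
                exact mul_le_mul hx1 h hω.le (Nat.cast_nonneg m)
              · simp only [hXm_def, if_neg h, zero_mul]; positivity
          _ = ENNReal.ofReal ((m:ℝ) * m) := by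
              rw [lintegral_const, measure_univ, mul_one]
      exact ne_top_of_le_ne_top ENNReal.ofReal_ne_top hle
    set B : ℝ := (b m).toReal with hB_def
    have hbmB : b m = ENNReal.ofReal B := (ENNReal.ofReal_toReal hbm_top).symm
    have haB : a ≤ B := by
      have := ENNReal.toReal_mono hbm_top hbm.le
      rwa [ENNReal.toReal_ofReal ha.le] at this
    have hBpos : 0 < B := lt_of_lt_of_le ha haB
    set θ : ℝ := a / B with hθ_def
    have hθpos : 0 < θ := div_pos ha hBpos
    have hθ1 : θ ≤ 1 := (div_le_one hBpos).mpr haB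
    set X : Ω → ℝ := fun ω => θ * Xm m ω with hX_def
    have hXmeas : Measurable X := measurable_const.mul (hXm_meas m)
    have hXnonneg : ∀ᵐ ω ∂P, 0 ≤ X ω := by
      filter_upwards [hξpos] with ω hω
      exact mul_nonneg hθpos.le (hXm_nonneg m ω hω)
    -- budget constraint
    have hXbudget : ∫⁻ ω, ENNReal.ofReal (X ω * ξ ω) ∂P = ENNReal.ofReal a := by
      have h1 : ∀ ω, ENNReal.ofReal (X ω * ξ ω)
          = ENNReal.ofReal θ * ENNReal.ofReal (Xm m ω * ξ ω) := by
        intro ω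
        rw [hX_def]
        rw [mul_assoc, ENNReal.ofReal_mul hθpos.le]
      simp_rw [h1]
      rw [lintegral_const_mul' _ _ ENNReal.ofReal_ne_top,
        show (∫⁻ ω, ENNReal.ofReal (Xm m ω * ξ ω) ∂P) = ENNReal.ofReal B from hbmB,
        ← ENNReal.ofReal_mul hθpos.le, hθ_def, div_mul_cancel₀ _ hBpos.ne']
    -- utility lower bound: u (X ω) ≥ lam * (X ω * ξ ω) a.e.
    have hpt : ∀ᵐ ω ∂P, ENNReal.ofReal (lam * (X ω * ξ ω)) ≤ ENNReal.ofReal (u (X ω)) := by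
      filter_upwards [hξpos] with ω hω
      apply ENNReal.ofReal_le_ofReal
      rcases eq_or_lt_of_le (mul_nonneg hθpos.le (hXm_nonneg m ω hω)) with h0 | hXpos
      · have hx0 : X ω = 0 := h0.symm
        simp [hx0, hu0]
      · have hXle : X ω ≤ I (lam * ξ ω) := by
          rw [hX_def]
          calc θ * Xm m ω ≤ 1 * Xm m ω :=
                mul_le_mul_of_nonneg_right hθ1 (hXm_nonneg m ω hω)
            _ = Xm m ω := one_mul _
            _ ≤ I (lam * ξ ω) := hXm_le m ω hω
        have h1 : X ω * u' (X ω) ≤ u (X ω) := mul_deriv_le' hu0 hu_conc hu_deriv hXpos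
        have h2 : u' (I (lam * ξ ω)) ≤ u' (X ω) := deriv_anti' hu_conc hu_deriv hXpos hXle
        rw [hI_right _ (by positivity)] at h2
        calc lam * (X ω * ξ ω) = X ω * (lam * ξ ω) := by ring
          _ ≤ X ω * u' (X ω) := mul_le_mul_of_nonneg_left h2 hXpos.le
          _ ≤ u (X ω) := h1
    have hutil : ENNReal.ofReal M ≤ ∫⁻ ω, ENNReal.ofReal (u (X ω)) ∂P := by
      have h2 : ∫⁻ ω, ENNReal.ofReal (lam * (X ω * ξ ω)) ∂P = ENNReal.ofReal M := by
        have h3 : ∀ ω, ENNReal.ofReal (lam * (X ω * ξ ω))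
            = ENNReal.ofReal lam * ENNReal.ofReal (X ω * ξ ω) := fun ω =>
          ENNReal.ofReal_mul hlam.le
        simp_rw [h3]
        rw [lintegral_const_mul' _ _ ENNReal.ofReal_ne_top, hXbudget,
          ← ENNReal.ofReal_mul hlam.le, hlam_def, div_mul_cancel₀ _ ha.ne']
      rw [← h2]
      exact lintegral_mono_ae hpt
    calc ENNReal.ofReal M ≤ ∫⁻ ω, ENNReal.ofReal (u (X ω)) ∂P := hutil
      _ ≤ Vval P ξ u a := by
        rw [Vval]
        exact le_iSup_of_le X (le_iSup_of_le hXmeas (le_iSup_of_le hXnonneg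
          (le_iSup_of_le hXbudget (le_refl _))))
  -- conclude Vval = ⊤
  by_contra htop
  have hfin : Vval P ξ u a ≠ ⊤ := htop
  have h1 := key ((Vval P ξ u a).toReal + 1) (by positivity)
  rw [ENNReal.ofReal_add ENNReal.toReal_nonneg zero_le_one, ENNReal.ofReal_toReal hfin,
    ENNReal.ofReal_one] at h1
  exact (ENNReal.lt_add_right hfin one_ne_zero).not_ge h1
end

section
/- If ε = essinf ξ > 0, then for every a>0 one has V(a) ≤ u(a/ε) < +∞, the Lagrange equation E[I(λξ)ξ]=a admits a solution λ>0, and Problem (P_a) admits the unique (up to a.s. equality) optimal solution X*=I(λξ). -/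
open MeasureTheory Filter Set
open scoped ENNReal

section AuxTangent

variable {u u' : ℝ → ℝ} {x y : ℝ}
  (hu_conc : StrictConcaveOn ℝ (Set.Ici (0:ℝ)) u)
  (hu_deriv : ∀ x : ℝ, 0 < x → HasDerivAt u (u' x) x)
include hu_conc hu_deriv

lemma aux_tangent_lt (hx : 0 < x) (hy : 0 ≤ y) (hne : y ≠ x) :
    u y < u x + u' x * (y - x) := by
  rcases hne.lt_or_gt with h | h
  · have := hu_conc.lt_slope_of_hasDerivAt hy hx.le h (hu_deriv x hx)
    rw [slope_def_field] at this
    have hxy : 0 < x - y := by linarith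
    rw [lt_div_iff₀ hxy] at this
    nlinarith
  · have := hu_conc.slope_lt_of_hasDerivAt hx.le (hx.trans h).le h (hu_deriv x hx)
    rw [slope_def_field] at this
    have hxy : 0 < y - x := by linarith
    rw [div_lt_iff₀ hxy] at this
    nlinarith

lemma aux_tangent_le (hx : 0 < x) (hy : 0 ≤ y) :
    u y ≤ u x + u' x * (y - x) := by
  rcases eq_or_ne y x with rfl | hne
  · simp
  · exact (aux_tangent_lt hu_conc hu_deriv hx hy hne).le

lemma aux_deriv_anti (hx : 0 < x) (hxy : x < y) : u' y < u' x := by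
  have h1 := aux_tangent_lt hu_conc hu_deriv hx (by linarith : (0:ℝ) ≤ y) (ne_of_gt hxy)
  have h2 := aux_tangent_lt hu_conc hu_deriv (hx.trans hxy) hx.le (ne_of_lt hxy)
  nlinarith

variable {I : ℝ → ℝ} {y1 y2 K d : ℝ} (hI_pos : ∀ y : ℝ, 0 < y → 0 < I y)
  (hI_right : ∀ y : ℝ, 0 < y → u' (I y) = y)
include hI_pos hI_right

lemma aux_I_anti (hy1 : 0 < y1) (h12 : y1 < y2) : I y2 < I y1 := by
  by_contra h
  push_neg at h
  rcases h.lt_or_eq with h | h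
  · have := aux_deriv_anti hu_conc hu_deriv (hI_pos _ hy1) h
    rw [hI_right _ hy1, hI_right _ (hy1.trans h12)] at this
    linarith
  · have := congrArg u' h
    rw [hI_right _ hy1, hI_right _ (hy1.trans h12)] at this
    linarith

lemma aux_I_anti_le (hy1 : 0 < y1) (h12 : y1 ≤ y2) : I y2 ≤ I y1 := by
  rcases h12.lt_or_eq with h | rfl
  · exact (aux_I_anti hu_conc hu_deriv hI_pos hI_right hy1 h).le
  · exact le_rfl

lemma aux_I_big (hK : 0 < K) (hy : 0 < y) (hyK : y < u' K) : K < I y := by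
  by_contra h
  push_neg at h
  rcases h.lt_or_eq with h | h
  · have := aux_deriv_anti hu_conc hu_deriv (hI_pos _ hy) h
    rw [hI_right _ hy] at this; linarith
  · rw [← h, hI_right _ hy] at hyK; linarith

omit hI_pos in
lemma aux_I_small (hu'_pos : ∀ x : ℝ, 0 < x → 0 < u' x)
    (hd : 0 < d) (hdy : u' d < y) : I y < d := by
  have hy : 0 < y := (hu'_pos d hd).trans hdy
  by_contra h
  push_neg at h
  rcases h.lt_or_eq with h | h
  · have := aux_deriv_anti hu_conc hu_deriv hd h
    rw [hI_right _ hy] at this; linarith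
  · rw [h, hI_right _ hy] at hdy; linarith

lemma aux_I_continuousAt (hu'_pos : ∀ x : ℝ, 0 < x → 0 < u' x)
    (hy : 0 < y) : ContinuousAt I y := by
  rw [ContinuousAt, tendsto_order]
  constructor
  · intro b hb
    rcases le_or_gt b 0 with hb0 | hb0
    · filter_upwards [eventually_gt_nhds hy] with z hz
      exact lt_of_le_of_lt hb0 (hI_pos _ hz)
    · have hub : y < u' b := by
        have := aux_deriv_anti hu_conc hu_deriv hb0 hb
        rwa [hI_right _ hy] at this
      have : ∀ᶠ z in nhds y, z ∈ Set.Ioo 0 (u' b) := Ioo_mem_nhds hy hub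
      filter_upwards [this] with z hz
      exact aux_I_big hu_conc hu_deriv hI_pos hI_right hb0 hz.1 hz.2
  · intro b hb
    have hb0 : 0 < b := (hI_pos _ hy).trans hb
    have hub : u' b < y := by
      have := aux_deriv_anti hu_conc hu_deriv (hI_pos _ hy) hb
      rwa [hI_right _ hy] at this
    filter_upwards [eventually_gt_nhds hub] with z hz
    exact aux_I_small hu_conc hu_deriv hI_right hu'_pos hb0 hz

end AuxTangent

set_option maxHeartbeats 2000000 in
theorem essinf_pos_solvable
    {Ω : Type*} [MeasurableSpace Ω] (P : Measure Ω) [IsProbabilityMeasure P]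
    (ξ : Ω → ℝ) (hξmeas : Measurable ξ) (hξpos : ∀ᵐ ω ∂P, 0 < ξ ω)
    (u u' u'' : ℝ → ℝ) (hu_meas : Measurable u)
    (hu0 : u 0 = 0) (hu_nonneg : ∀ x : ℝ, 0 ≤ x → 0 ≤ u x)
    (hu_mono : StrictMonoOn u (Set.Ici (0:ℝ)))
    (hu_conc : StrictConcaveOn ℝ (Set.Ici (0:ℝ)) u)
    (hu_deriv : ∀ x : ℝ, 0 < x → HasDerivAt u (u' x) x)
    (hu_deriv2 : ∀ x : ℝ, 0 < x → HasDerivAt u' (u'' x) x)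
    (hu'_pos : ∀ x : ℝ, 0 < x → 0 < u' x)
    (hu'_zero : Tendsto u' (nhdsWithin 0 (Set.Ioi 0)) atTop)
    (hu'_top : Tendsto u' atTop (nhds 0))
    (I : ℝ → ℝ) (hI_meas : Measurable I) (hI_pos : ∀ y : ℝ, 0 < y → 0 < I y)
    (hI_left : ∀ x : ℝ, 0 < x → I (u' x) = x)
    (hI_right : ∀ y : ℝ, 0 < y → u' (I y) = y)
    (heps : 0 < essInf ξ P)
    :
    ∀ a : ℝ, 0 < a →
      Vval P ξ u a ≤ ENNReal.ofReal (u (a / essInf ξ P)) ∧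
      Vval P ξ u a < ⊤ ∧
      ∃ lam : ℝ, 0 < lam ∧ fLag P ξ I lam = ENNReal.ofReal a ∧
        IsOptimal P ξ u a (fun ω => I (lam * ξ ω)) ∧
        ∀ Y : Ω → ℝ, IsOptimal P ξ u a Y → Y =ᵐ[P] fun ω => I (lam * ξ ω) := by
  intro a ha
  set eps := essInf ξ P with heps_def
  -- a.e. lower bound by the essential infimum
  have hxi_ge : ∀ᵐ ω ∂P, eps ≤ ξ ω := by
    refine ae_essInf_le ⟨0, ?_⟩
    rw [eventually_map]
    filter_upwards [hξpos] with ω h using h.le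
  -- convenient abbreviations
  have hImono : ∀ y1 y2 : ℝ, 0 < y1 → y1 ≤ y2 → I y2 ≤ I y1 :=
    fun y1 y2 h1 h2 => aux_I_anti_le hu_conc hu_deriv hI_pos hI_right h1 h2
  have humono : MonotoneOn u (Set.Ici (0:ℝ)) := hu_mono.monotoneOn
  -- the key a.e. pointwise bound for fLag
  have hyIy : ∀ y : ℝ, 0 < y → y * I y ≤ u (I y) := by
    intro y hy
    have h := aux_tangent_le hu_conc hu_deriv (hI_pos y hy) le_rfl (y := 0)
    rw [hu0, hI_right y hy] at h
    nlinarith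
  have hbound : ∀ lam : ℝ, 0 < lam → ∀ᵐ ω ∂P,
      I (lam * ξ ω) * ξ ω ≤ u (I (lam * eps)) / lam := by
    intro lam hlam
    filter_upwards [hξpos, hxi_ge] with ω hω hωe
    have hy : 0 < lam * ξ ω := mul_pos hlam hω
    have hye : 0 < lam * eps := mul_pos hlam heps
    have h1 : I (lam * ξ ω) ≤ I (lam * eps) :=
      hImono _ _ hye (by nlinarith)
    have h2 : u (I (lam * ξ ω)) ≤ u (I (lam * eps)) :=
      humono (hI_pos _ hy).le (hI_pos _ hye).le h1
    have h3 : (lam * ξ ω) * I (lam * ξ ω) ≤ u (I (lam * eps)) :=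
      (hyIy _ hy).trans h2
    rw [le_div_iff₀ hlam]
    nlinarith
  have hfLag_le : ∀ lam : ℝ, 0 < lam →
      fLag P ξ I lam ≤ ENNReal.ofReal (u (I (lam * eps)) / lam) := by
    intro lam hlam
    calc fLag P ξ I lam
        ≤ ∫⁻ _, ENNReal.ofReal (u (I (lam * eps)) / lam) ∂P := by
          refine lintegral_mono_ae ?_
          filter_upwards [hbound lam hlam] with ω h
          exact ENNReal.ofReal_le_ofReal h
      _ = ENNReal.ofReal (u (I (lam * eps)) / lam) := by
          rw [lintegral_const, measure_univ, mul_one]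
  have hfLag_ne_top : ∀ lam : ℝ, 0 < lam → fLag P ξ I lam ≠ ⊤ :=
    fun lam hlam => ((hfLag_le lam hlam).trans_lt ENNReal.ofReal_lt_top).ne
  -- Part 1 : the bound on the value function
  have hc : 0 < a / eps := div_pos ha heps
  have hVbound : Vval P ξ u a ≤ ENNReal.ofReal (u (a / eps)) := by
    refine iSup_le fun X => iSup_le fun hXm => iSup_le fun hX0 => iSup_le fun hXb => ?_
    set c := a / eps with hc_def
    -- E[X] ≤ a / eps
    have hXmeas' : Measurable fun ω => ENNReal.ofReal (X ω) :=
      ENNReal.measurable_ofReal.comp hXm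
    have hXint : ∫⁻ ω, ENNReal.ofReal (X ω) ∂P ≤ ENNReal.ofReal c := by
      have h1 : ENNReal.ofReal eps * ∫⁻ ω, ENNReal.ofReal (X ω) ∂P
          ≤ ENNReal.ofReal a := by
        rw [← lintegral_const_mul _ hXmeas', ← hXb]
        refine lintegral_mono_ae ?_
        filter_upwards [hxi_ge, hX0] with ω h1 h2
        rw [← ENNReal.ofReal_mul heps.le]
        exact ENNReal.ofReal_le_ofReal (by nlinarith)
      rw [hc_def, ENNReal.ofReal_div_of_pos heps,
        ENNReal.le_div_iff_mul_le
          (Or.inl (ENNReal.ofReal_pos.2 heps).ne') (Or.inl ENNReal.ofReal_ne_top)]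
      rwa [mul_comm]
    -- the tangent line inequality integrated
    have humeas' : Measurable fun ω => ENNReal.ofReal (u (X ω)) :=
      ENNReal.measurable_ofReal.comp (hu_meas.comp hXm)
    have hmain : (∫⁻ ω, ENNReal.ofReal (u (X ω)) ∂P) + ENNReal.ofReal (u' c * c)
        ≤ ENNReal.ofReal (u c) + ENNReal.ofReal (u' c) * ∫⁻ ω, ENNReal.ofReal (X ω) ∂P := by
      calc (∫⁻ ω, ENNReal.ofReal (u (X ω)) ∂P) + ENNReal.ofReal (u' c * c)
          = ∫⁻ ω, (ENNReal.ofReal (u (X ω)) + ENNReal.ofReal (u' c * c)) ∂P := by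
            rw [lintegral_add_right _ measurable_const, lintegral_const, measure_univ, mul_one]
        _ ≤ ∫⁻ ω, (ENNReal.ofReal (u c) + ENNReal.ofReal (u' c) * ENNReal.ofReal (X ω)) ∂P := by
            refine lintegral_mono_ae ?_
            filter_upwards [hX0] with ω h0
            have htan := aux_tangent_le hu_conc hu_deriv hc h0 (y := X ω)
            rw [← ENNReal.ofReal_mul (hu'_pos c hc).le,
              ← ENNReal.ofReal_add (hu_nonneg _ h0) (mul_nonneg (hu'_pos c hc).le hc.le),
              ← ENNReal.ofReal_add (hu_nonneg _ hc.le) (mul_nonneg (hu'_pos c hc).le h0)]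
            exact ENNReal.ofReal_le_ofReal (by nlinarith)
        _ = ENNReal.ofReal (u c) + ENNReal.ofReal (u' c) * ∫⁻ ω, ENNReal.ofReal (X ω) ∂P := by
            rw [lintegral_add_left measurable_const, lintegral_const, measure_univ, mul_one,
              lintegral_const_mul _ hXmeas']
    have h2 : ENNReal.ofReal (u' c) * (∫⁻ ω, ENNReal.ofReal (X ω) ∂P)
        ≤ ENNReal.ofReal (u' c * c) := by
      rw [ENNReal.ofReal_mul (hu'_pos c hc).le]
      exact mul_le_mul_right hXint _
    have := hmain.trans (add_le_add_right h2 _)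
    rwa [ENNReal.add_le_add_iff_right ENNReal.ofReal_ne_top] at this
  refine ⟨hVbound, hVbound.trans_lt ENNReal.ofReal_lt_top, ?_⟩
  -- measurability of the integrand of fLag
  have hFmeas : ∀ lam : ℝ, Measurable fun ω => ENNReal.ofReal (I (lam * ξ ω) * ξ ω) :=
    fun lam => ENNReal.measurable_ofReal.comp
      ((hI_meas.comp (measurable_const.mul hξmeas)).mul hξmeas)
  -- continuity of fLag on (0, ∞)
  have hfLag_cont : ∀ lam0 : ℝ, 0 < lam0 →
      Tendsto (fun l => fLag P ξ I l) (nhds lam0) (nhds (fLag P ξ I lam0)) := by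
    intro lam0 hlam0
    have hhalf : 0 < lam0 / 2 := by linarith
    refine tendsto_lintegral_filter_of_dominated_convergence
      (fun _ => ENNReal.ofReal (u (I (lam0 / 2 * eps)) / (lam0 / 2)))
      (Eventually.of_forall fun l => hFmeas l) ?_ ?_ ?_
    · filter_upwards [eventually_gt_nhds (by linarith : lam0 / 2 < lam0)] with l hl
      have hlpos : 0 < l := hhalf.trans hl
      filter_upwards [hbound l hlpos] with ω hb
      refine (ENNReal.ofReal_le_ofReal hb).trans (ENNReal.ofReal_le_ofReal ?_)
      have h1 : I (l * eps) ≤ I (lam0 / 2 * eps) :=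
        hImono _ _ (mul_pos hhalf heps) (by nlinarith)
      have h2 : u (I (l * eps)) ≤ u (I (lam0 / 2 * eps)) :=
        humono (hI_pos _ (mul_pos hlpos heps)).le
          (hI_pos _ (mul_pos hhalf heps)).le h1
      have h3 : 0 ≤ u (I (l * eps)) := hu_nonneg _ (hI_pos _ (mul_pos hlpos heps)).le
      exact div_le_div₀ (h3.trans h2) h2 hhalf hl.le
    · rw [lintegral_const, measure_univ, mul_one]; exact ENNReal.ofReal_ne_top
    · filter_upwards [hξpos] with ω hω
      have cg : ContinuousAt (fun l : ℝ => l * ξ ω) lam0 := (continuous_mul_right _).continuousAt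
      have c0 : ContinuousAt (fun l : ℝ => I (l * ξ ω)) lam0 :=
        ContinuousAt.comp (g := I) (f := fun l : ℝ => l * ξ ω) (x := lam0)
          (aux_I_continuousAt hu_conc hu_deriv hI_pos hI_right hu'_pos
            (mul_pos hlam0 hω)) cg
      have c1 : ContinuousAt (fun l : ℝ => I (l * ξ ω) * ξ ω) lam0 :=
        c0.mul continuousAt_const
      exact (ENNReal.continuous_ofReal.continuousAt.comp c1)
  obtain ⟨F, hF_def⟩ : ∃ F : ℝ → ℝ, F = fun l => (fLag P ξ I l).toReal := ⟨_, rfl⟩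
  have hF_eval : ∀ l, F l = (fLag P ξ I l).toReal := fun l => by rw [hF_def]
  have hFcontAt : ∀ lam0 : ℝ, 0 < lam0 → ContinuousAt F lam0 := by
    intro lam0 hlam0
    rw [hF_def]
    exact (ENNReal.tendsto_toReal (hfLag_ne_top lam0 hlam0)).comp (hfLag_cont lam0 hlam0)
  -- choose λ₂ with F λ₂ ≤ a
  have hc0 : 0 ≤ u (I eps) := hu_nonneg _ (hI_pos _ heps).le
  obtain ⟨lam2, hlam2_def⟩ : ∃ l : ℝ, l = u (I eps) / a + 1 := ⟨_, rfl⟩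
  have hlam2_ge1 : 1 ≤ lam2 := by
    have : 0 ≤ u (I eps) / a := div_nonneg hc0 ha.le
    rw [hlam2_def]; linarith
  have hlam2_pos : 0 < lam2 := lt_of_lt_of_le one_pos hlam2_ge1
  have hF2 : F lam2 ≤ a := by
    have h1 : fLag P ξ I lam2 ≤ ENNReal.ofReal (u (I (lam2 * eps)) / lam2) :=
      hfLag_le lam2 hlam2_pos
    have hnum0 : 0 ≤ u (I (lam2 * eps)) := hu_nonneg _ (hI_pos _ (mul_pos hlam2_pos heps)).le
    have h2 : u (I (lam2 * eps)) / lam2 ≤ u (I eps) / lam2 := by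
      have hIle : I (lam2 * eps) ≤ I eps := hImono _ _ heps (by nlinarith)
      have := humono (hI_pos _ (mul_pos hlam2_pos heps)).le (hI_pos _ heps).le hIle
      gcongr
    have h3 : u (I eps) / lam2 < a := by
      rw [div_lt_iff₀ hlam2_pos, hlam2_def]
      have h4 : a * (u (I eps) / a) = u (I eps) := by field_simp
      nlinarith
    calc F lam2 ≤ (ENNReal.ofReal (u (I (lam2 * eps)) / lam2)).toReal := by
          rw [hF_eval]
          exact ENNReal.toReal_mono ENNReal.ofReal_ne_top h1
      _ = u (I (lam2 * eps)) / lam2 := ENNReal.toReal_ofReal (by positivity)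
      _ ≤ u (I eps) / lam2 := h2
      _ ≤ a := h3.le
  -- choose the set S = {ξ ≤ M} of positive measure
  obtain ⟨n, hn⟩ : ∃ n : ℕ, P {ω | ξ ω ≤ (n : ℝ)} ≠ 0 := by
    by_contra h
    push_neg at h
    have h0 : P (⋃ n : ℕ, {ω | ξ ω ≤ (n : ℝ)}) = 0 := measure_iUnion_null h
    have huniv : (⋃ n : ℕ, {ω | ξ ω ≤ (n : ℝ)}) = Set.univ := by
      refine Set.eq_univ_of_forall fun ω => ?_
      obtain ⟨n, hn⟩ := exists_nat_ge (ξ ω)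
      exact Set.mem_iUnion.2 ⟨n, hn⟩
    rw [huniv, measure_univ] at h0
    exact one_ne_zero h0
  obtain ⟨M, hM_def⟩ : ∃ m : ℝ, m = (n : ℝ) + 1 := ⟨_, rfl⟩
  have hM : 0 < M := by rw [hM_def]; positivity
  have hS_meas : MeasurableSet {ω | ξ ω ≤ M} := hξmeas measurableSet_Iic
  have hS_ne : P {ω | ξ ω ≤ M} ≠ 0 := by
    intro h0
    refine hn (measure_mono_null ?_ h0)
    intro ω hω
    have h1 : ξ ω ≤ (n : ℝ) := hω
    show ξ ω ≤ M
    rw [hM_def]; linarith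
  obtain ⟨p, hp_def⟩ : ∃ q : ℝ, q = (P {ω | ξ ω ≤ M}).toReal := ⟨_, rfl⟩
  have hp : 0 < p := hp_def ▸ ENNReal.toReal_pos hS_ne (measure_ne_top P _)
  -- choose λ₁ with a ≤ F λ₁
  obtain ⟨K, hK_def⟩ : ∃ k : ℝ, k = a / (eps * p) + 1 := ⟨_, rfl⟩
  have hK : 0 < K := by
    have : 0 ≤ a / (eps * p) := div_nonneg ha.le (by positivity)
    rw [hK_def]; linarith
  obtain ⟨lam1, hlam1_def⟩ : ∃ l : ℝ, l = min (u' K / (2 * M)) (lam2 / 2) := ⟨_, rfl⟩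
  have hu'K : 0 < u' K := hu'_pos K hK
  have hlam1_pos : 0 < lam1 := by
    rw [hlam1_def]
    exact lt_min (by positivity) (by positivity)
  have hlam1_lt2 : lam1 < lam2 := by
    rw [hlam1_def]
    exact (min_le_right _ _).trans_lt (by linarith)
  have hlam1M : lam1 * M < u' K := by
    have h1 : lam1 ≤ u' K / (2 * M) := hlam1_def ▸ min_le_left _ _
    rw [le_div_iff₀ (by positivity)] at h1
    nlinarith
  have hF1 : a ≤ F lam1 := by
    have hlam1M_pos : 0 < lam1 * M := mul_pos hlam1_pos hM
    have hIK : K < I (lam1 * M) :=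
      aux_I_big hu_conc hu_deriv hI_pos hI_right hK hlam1M_pos hlam1M
    have hkey : a ≤ I (lam1 * M) * eps * p := by
      have h1 : a / (eps * p) < I (lam1 * M) := by
        have h2 : a / (eps * p) < K := by rw [hK_def]; linarith
        linarith
      have h2 : 0 < eps * p := by positivity
      rw [div_lt_iff₀ h2] at h1
      nlinarith
    have hge : ENNReal.ofReal a ≤ fLag P ξ I lam1 := by
      have hPS : P {ω | ξ ω ≤ M} = ENNReal.ofReal p := by
        rw [hp_def]; exact (ENNReal.ofReal_toReal (measure_ne_top P _)).symm
      have hIM_pos : 0 < I (lam1 * M) := hI_pos _ hlam1M_pos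
      have step1 : ENNReal.ofReal a ≤ ENNReal.ofReal (I (lam1 * M) * eps) * P {ω | ξ ω ≤ M} := by
        rw [hPS, ← ENNReal.ofReal_mul (mul_nonneg hIM_pos.le heps.le)]
        exact ENNReal.ofReal_le_ofReal (by nlinarith)
      have step2 : ENNReal.ofReal (I (lam1 * M) * eps) * P {ω | ξ ω ≤ M}
          ≤ ∫⁻ ω in {ω | ξ ω ≤ M}, ENNReal.ofReal (I (lam1 * ξ ω) * ξ ω) ∂P := by
        rw [← setLIntegral_const {ω | ξ ω ≤ M} _]
        refine setLIntegral_mono_ae ((hFmeas lam1).aemeasurable.restrict) ?_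
        filter_upwards [hξpos, hxi_ge] with ω hω hωe hωS
        have hωM : ξ ω ≤ M := hωS
        have hIle : I (lam1 * M) ≤ I (lam1 * ξ ω) :=
          hImono _ _ (mul_pos hlam1_pos hω) (by nlinarith)
        refine ENNReal.ofReal_le_ofReal ?_
        nlinarith
      exact step1.trans (step2.trans (setLIntegral_le_lintegral _ _))
    calc a = (ENNReal.ofReal a).toReal := (ENNReal.toReal_ofReal ha.le).symm
      _ ≤ F lam1 := by
          rw [hF_eval]
          exact ENNReal.toReal_mono (hfLag_ne_top lam1 hlam1_pos) hge
  -- intermediate value theorem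
  have hFcont : ContinuousOn F (Set.Icc lam1 lam2) := fun l hl =>
    (hFcontAt l (lt_of_lt_of_le hlam1_pos hl.1)).continuousWithinAt
  obtain ⟨lam, hlamIcc, hlamEq⟩ :=
    intermediate_value_Icc' hlam1_lt2.le hFcont ⟨hF2, hF1⟩
  have hlam_pos : 0 < lam := lt_of_lt_of_le hlam1_pos hlamIcc.1
  have hfLag_eq : fLag P ξ I lam = ENNReal.ofReal a := by
    rw [← hlamEq, hF_eval]
    exact (ENNReal.ofReal_toReal (hfLag_ne_top lam hlam_pos)).symm
  -- basic facts about the candidate optimal solution X* = I(λξ)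
  have hXm : Measurable fun ω => I (lam * ξ ω) := hI_meas.comp (measurable_const.mul hξmeas)
  have hX0 : ∀ᵐ ω ∂P, 0 ≤ I (lam * ξ ω) := by
    filter_upwards [hξpos] with ω hω
    exact (hI_pos _ (mul_pos hlam_pos hω)).le
  have hXb : ∫⁻ ω, ENNReal.ofReal (I (lam * ξ ω) * ξ ω) ∂P = ENNReal.ofReal a := hfLag_eq
  have hXxi0 : ∀ᵐ ω ∂P, 0 ≤ I (lam * ξ ω) * ξ ω := by
    filter_upwards [hξpos] with ω hω
    exact mul_nonneg (hI_pos _ (mul_pos hlam_pos hω)).le hω.le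
  -- E[u(X*)] is finite
  have hEX_le : ∫⁻ ω, ENNReal.ofReal (u (I (lam * ξ ω))) ∂P
      ≤ ENNReal.ofReal (u (I (lam * eps))) := by
    calc ∫⁻ ω, ENNReal.ofReal (u (I (lam * ξ ω))) ∂P
        ≤ ∫⁻ _, ENNReal.ofReal (u (I (lam * eps))) ∂P := by
          refine lintegral_mono_ae ?_
          filter_upwards [hξpos, hxi_ge] with ω hω hωe
          have hILe : I (lam * ξ ω) ≤ I (lam * eps) :=
            hImono _ _ (mul_pos hlam_pos heps) (by nlinarith)
          exact ENNReal.ofReal_le_ofReal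
            (humono (hI_pos _ (mul_pos hlam_pos hω)).le
              (hI_pos _ (mul_pos hlam_pos heps)).le hILe)
      _ = ENNReal.ofReal (u (I (lam * eps))) := by
          rw [lintegral_const, measure_univ, mul_one]
  have hEX_ne_top : ∫⁻ ω, ENNReal.ofReal (u (I (lam * ξ ω))) ∂P ≠ ⊤ :=
    (hEX_le.trans_lt ENNReal.ofReal_lt_top).ne
  -- the key a.e. tangent inequality
  have hkeyae : ∀ Y : Ω → ℝ, (∀ᵐ ω ∂P, 0 ≤ Y ω) → ∀ᵐ ω ∂P,
      u (Y ω) + lam * (I (lam * ξ ω) * ξ ω)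
        ≤ u (I (lam * ξ ω)) + lam * (Y ω * ξ ω) := by
    intro Y hY0
    filter_upwards [hξpos, hY0] with ω hω h0
    have hy : 0 < lam * ξ ω := mul_pos hlam_pos hω
    have hx : 0 < I (lam * ξ ω) := hI_pos _ hy
    have htan := aux_tangent_le hu_conc hu_deriv hx h0 (y := Y ω)
    rw [hI_right _ hy] at htan
    nlinarith
  -- integral of a sum of the relevant shape
  have hsum_int : ∀ g h : Ω → ℝ, Measurable g → Measurable h →
      (∀ᵐ ω ∂P, 0 ≤ g ω) → (∀ᵐ ω ∂P, 0 ≤ h ω) →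
      ∫⁻ ω, ENNReal.ofReal (g ω + lam * h ω) ∂P
        = (∫⁻ ω, ENNReal.ofReal (g ω) ∂P)
          + ENNReal.ofReal lam * ∫⁻ ω, ENNReal.ofReal (h ω) ∂P := by
    intro g h hg hh hg0 hh0
    have heq : ∫⁻ ω, ENNReal.ofReal (g ω + lam * h ω) ∂P
        = ∫⁻ ω, (ENNReal.ofReal (g ω) + ENNReal.ofReal lam * ENNReal.ofReal (h ω)) ∂P := by
      refine lintegral_congr_ae ?_
      filter_upwards [hg0, hh0] with ω h1 h2
      rw [← ENNReal.ofReal_mul hlam_pos.le,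
        ← ENNReal.ofReal_add h1 (mul_nonneg hlam_pos.le h2)]
    rw [heq, lintegral_add_left hg.ennreal_ofReal,
      lintegral_const_mul _ hh.ennreal_ofReal]
  have hc_ne_top : ENNReal.ofReal lam * ENNReal.ofReal a ≠ ⊤ :=
    ENNReal.mul_ne_top ENNReal.ofReal_ne_top ENNReal.ofReal_ne_top
  -- optimality
  have hopt4 : ∀ Y : Ω → ℝ, Measurable Y → (∀ᵐ ω ∂P, 0 ≤ Y ω) →
      (∫⁻ ω, ENNReal.ofReal (Y ω * ξ ω) ∂P = ENNReal.ofReal a) →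
      ∫⁻ ω, ENNReal.ofReal (u (Y ω)) ∂P
        ≤ ∫⁻ ω, ENNReal.ofReal (u (I (lam * ξ ω))) ∂P := by
    intro Y hYm hY0 hYb
    have hYxi0 : ∀ᵐ ω ∂P, 0 ≤ Y ω * ξ ω := by
      filter_upwards [hξpos, hY0] with ω hω h0
      exact mul_nonneg h0 hω.le
    have huY0 : ∀ᵐ ω ∂P, 0 ≤ u (Y ω) := by
      filter_upwards [hY0] with ω h0 using hu_nonneg _ h0
    have huX0 : ∀ᵐ ω ∂P, 0 ≤ u (I (lam * ξ ω)) := by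
      filter_upwards [hX0] with ω h0 using hu_nonneg _ h0
    have hmono := lintegral_mono_ae
      ((hkeyae Y hY0).mono fun ω h => ENNReal.ofReal_le_ofReal h)
    have e1 : ∫⁻ ω, ENNReal.ofReal (u (Y ω) + lam * (I (lam * ξ ω) * ξ ω)) ∂P
        = (∫⁻ ω, ENNReal.ofReal (u (Y ω)) ∂P) + ENNReal.ofReal lam * ENNReal.ofReal a := by
      rw [← hXb]
      exact hsum_int _ _ (hu_meas.comp hYm) (hXm.mul hξmeas) huY0 hXxi0
    have e2 : ∫⁻ ω, ENNReal.ofReal (u (I (lam * ξ ω)) + lam * (Y ω * ξ ω)) ∂P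
        = (∫⁻ ω, ENNReal.ofReal (u (I (lam * ξ ω))) ∂P)
          + ENNReal.ofReal lam * ENNReal.ofReal a := by
      rw [← hYb]
      exact hsum_int _ _ (hu_meas.comp hXm) (hYm.mul hξmeas) huX0 hYxi0
    rw [e1, e2, ENNReal.add_le_add_iff_right hc_ne_top] at hmono
    exact hmono
  refine ⟨lam, hlam_pos, hfLag_eq, ⟨hXm, hX0, hXb, hopt4⟩, ?_⟩
  -- uniqueness
  intro Y hYopt
  obtain ⟨hYm, hY0, hYb, hYdom⟩ := hYopt
  have hYxi0 : ∀ᵐ ω ∂P, 0 ≤ Y ω * ξ ω := by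
    filter_upwards [hξpos, hY0] with ω hω h0
    exact mul_nonneg h0 hω.le
  have huY0 : ∀ᵐ ω ∂P, 0 ≤ u (Y ω) := by
    filter_upwards [hY0] with ω h0 using hu_nonneg _ h0
  have huX0 : ∀ᵐ ω ∂P, 0 ≤ u (I (lam * ξ ω)) := by
    filter_upwards [hX0] with ω h0 using hu_nonneg _ h0
  have h1 : ∫⁻ ω, ENNReal.ofReal (u (I (lam * ξ ω))) ∂P
      ≤ ∫⁻ ω, ENNReal.ofReal (u (Y ω)) ∂P := hYdom _ hXm hX0 hXb
  have h2 := hopt4 Y hYm hY0 hYb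
  have hEq : ∫⁻ ω, ENNReal.ofReal (u (Y ω)) ∂P
      = ∫⁻ ω, ENNReal.ofReal (u (I (lam * ξ ω))) ∂P := le_antisymm h2 h1
  have hint_f : ∫⁻ ω, ENNReal.ofReal (u (Y ω) + lam * (I (lam * ξ ω) * ξ ω)) ∂P
      = (∫⁻ ω, ENNReal.ofReal (u (Y ω)) ∂P) + ENNReal.ofReal lam * ENNReal.ofReal a := by
    rw [← hXb]
    exact hsum_int _ _ (hu_meas.comp hYm) (hXm.mul hξmeas) huY0 hXxi0
  have hint_g : ∫⁻ ω, ENNReal.ofReal (u (I (lam * ξ ω)) + lam * (Y ω * ξ ω)) ∂P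
      = (∫⁻ ω, ENNReal.ofReal (u (I (lam * ξ ω))) ∂P)
        + ENNReal.ofReal lam * ENNReal.ofReal a := by
    rw [← hYb]
    exact hsum_int _ _ (hu_meas.comp hXm) (hYm.mul hξmeas) huX0 hYxi0
  have hf_ne : ∫⁻ ω, ENNReal.ofReal (u (Y ω) + lam * (I (lam * ξ ω) * ξ ω)) ∂P ≠ ⊤ := by
    rw [hint_f, hEq]
    exact ENNReal.add_ne_top.2 ⟨hEX_ne_top, hc_ne_top⟩
  have hg_le_f : ∫⁻ ω, ENNReal.ofReal (u (I (lam * ξ ω)) + lam * (Y ω * ξ ω)) ∂P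
      ≤ ∫⁻ ω, ENNReal.ofReal (u (Y ω) + lam * (I (lam * ξ ω) * ξ ω)) ∂P := by
    rw [hint_f, hint_g, hEq]
  have hgmeas : Measurable fun ω =>
      ENNReal.ofReal (u (I (lam * ξ ω)) + lam * (Y ω * ξ ω)) :=
    ((hu_meas.comp hXm).add (measurable_const.mul (hYm.mul hξmeas))).ennreal_ofReal
  have hae := ae_eq_of_ae_le_of_lintegral_le
    ((hkeyae Y hY0).mono fun ω h => ENNReal.ofReal_le_ofReal h)
    hf_ne hgmeas.aemeasurable hg_le_f
  filter_upwards [hae, hξpos, hY0] with ω heqω hω h0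
  have hy : 0 < lam * ξ ω := mul_pos hlam_pos hω
  have hx : 0 < I (lam * ξ ω) := hI_pos _ hy
  have hreal : u (Y ω) + lam * (I (lam * ξ ω) * ξ ω)
      = u (I (lam * ξ ω)) + lam * (Y ω * ξ ω) := by
    refine (ENNReal.ofReal_eq_ofReal_iff ?_ ?_).1 heqω
    · exact add_nonneg (hu_nonneg _ h0)
        (mul_nonneg hlam_pos.le (mul_nonneg hx.le hω.le))
    · exact add_nonneg (hu_nonneg _ hx.le)
        (mul_nonneg hlam_pos.le (mul_nonneg h0 hω.le))
  show Y ω = I (lam * ξ ω)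
  by_contra hne
  have hstrict := aux_tangent_lt hu_conc hu_deriv hx h0 hne
  rw [hI_right _ hy] at hstrict
  nlinarith
end

section
/- If liminf_{x→+∞} R(x) > 0, then for every k>1 one has limsup_{x→+∞} u'(kx)/u'(x) < 1. More precisely, if R(x) ≥ K for all x ≥ M (for some K>0, M>0), then u'(kx)/u'(x) ≤ 1/(1+K ln k) for every x ≥ M and every k>1. -/
open Filter Set

theorem risk_aversion_ratio_bound
    (u u' u'' : ℝ → ℝ) (hu_meas : Measurable u)
    (hu0 : u 0 = 0) (hu_nonneg : ∀ x : ℝ, 0 ≤ x → 0 ≤ u x)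
    (hu_mono : StrictMonoOn u (Set.Ici (0:ℝ)))
    (hu_conc : StrictConcaveOn ℝ (Set.Ici (0:ℝ)) u)
    (hu_deriv : ∀ x : ℝ, 0 < x → HasDerivAt u (u' x) x)
    (hu_deriv2 : ∀ x : ℝ, 0 < x → HasDerivAt u' (u'' x) x)
    (hu'_pos : ∀ x : ℝ, 0 < x → 0 < u' x)
    (hu'_zero : Tendsto u' (nhdsWithin 0 (Set.Ioi 0)) atTop)
    (hu'_top : Tendsto u' atTop (nhds 0))
    (K M : ℝ) (hK : 0 < K) (hM : 0 < M)
    (hR : ∀ x : ℝ, M ≤ x → K ≤ -x * u'' x / u' x)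
    :
    (∀ k : ℝ, 1 < k → ∀ x : ℝ, M ≤ x →
        u' (k * x) / u' x ≤ 1 / (1 + K * Real.log k)) ∧
      (∀ k : ℝ, 1 < k → Filter.limsup (fun x => u' (k * x) / u' x) Filter.atTop < 1) := by
  -- auxiliary function g t = log (u' t) + K * log t, antitone on Ici M
  set g : ℝ → ℝ := fun t => Real.log (u' t) + K * Real.log t with hg
  have hgderiv : ∀ t : ℝ, M ≤ t → HasDerivAt g (u'' t / u' t + K * (1 / t)) t := by
    intro t ht
    have htpos : 0 < t := lt_of_lt_of_le hM ht
    have h1 : HasDerivAt (fun s => Real.log (u' s)) (u'' t / u' t) t :=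
      (hu_deriv2 t htpos).log (ne_of_gt (hu'_pos t htpos))
    have h2 : HasDerivAt (fun s => K * Real.log s) (K * (1 / t)) t :=
      (Real.hasDerivAt_log (ne_of_gt htpos)).const_mul K |>.congr_deriv (by ring)
    exact h1.add h2
  have hganti : AntitoneOn g (Set.Ici M) := by
    refine antitoneOn_of_deriv_nonpos (convex_Ici M) ?_ ?_ ?_
    · intro t ht
      exact (hgderiv t ht).continuousAt.continuousWithinAt
    · intro t ht
      rw [interior_Ici] at ht
      exact (hgderiv t ht.le).differentiableAt.differentiableWithinAt
    · intro t ht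
      rw [interior_Ici] at ht
      have ht' : M ≤ t := le_of_lt ht
      have htpos : 0 < t := lt_of_lt_of_le hM ht'
      rw [(hgderiv t ht').deriv]
      have hR' := hR t ht'
      have hu'pos := hu'_pos t htpos
      have h1 : K * u' t ≤ -t * u'' t := by
        rw [le_div_iff₀ hu'pos] at hR'
        linarith
      have h2 : u'' t / u' t ≤ -(K / t) := by
        rw [div_le_iff₀ hu'pos, neg_mul, le_neg, div_mul_eq_mul_div,
          div_le_iff₀ htpos]
        nlinarith
      have hK1 : K * (1 / t) = K / t := by ring
      linarith
  have key : ∀ k : ℝ, 1 < k → ∀ x : ℝ, M ≤ x →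
      u' (k * x) / u' x ≤ 1 / (1 + K * Real.log k) := by
    intro k hk x hx
    have hxpos : 0 < x := lt_of_lt_of_le hM hx
    have hkx : x ≤ k * x := le_mul_of_one_le_left hxpos.le hk.le
    have hkxM : M ≤ k * x := le_trans hx hkx
    have hkxpos : 0 < k * x := lt_of_lt_of_le hM hkxM
    have hgle : g (k * x) ≤ g x := hganti hx hkxM hkx
    have hlogkx : Real.log (k * x) = Real.log k + Real.log x :=
      Real.log_mul (by linarith) (ne_of_gt hxpos)
    have hlog : Real.log (u' (k * x)) ≤ Real.log (u' x) - K * Real.log k := by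
      simp only [hg] at hgle
      rw [hlogkx] at hgle
      linarith
    have hu'x := hu'_pos x hxpos
    have hu'kx := hu'_pos (k * x) hkxpos
    have hexp : u' (k * x) ≤ u' x * Real.exp (-(K * Real.log k)) := by
      have := Real.exp_le_exp.mpr hlog
      rw [Real.exp_log hu'kx] at this
      calc u' (k * x) ≤ Real.exp (Real.log (u' x) - K * Real.log k) := this
        _ = u' x * Real.exp (-(K * Real.log k)) := by
            rw [sub_eq_add_neg, Real.exp_add, Real.exp_log hu'x]
    have hlogk : 0 < Real.log k := Real.log_pos hk
    have hKl : 0 < K * Real.log k := mul_pos hK hlogk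
    have hbound : Real.exp (-(K * Real.log k)) ≤ 1 / (1 + K * Real.log k) := by
      rw [le_div_iff₀ (by linarith)]
      have h1 : 1 + K * Real.log k ≤ Real.exp (K * Real.log k) :=
        Real.add_one_le_exp _ |>.trans_eq' (by ring)
      calc Real.exp (-(K * Real.log k)) * (1 + K * Real.log k)
          ≤ Real.exp (-(K * Real.log k)) * Real.exp (K * Real.log k) := by
            exact mul_le_mul_of_nonneg_left h1 (Real.exp_pos _).le
        _ = 1 := by rw [← Real.exp_add]; simp
    calc u' (k * x) / u' x ≤ Real.exp (-(K * Real.log k)) := by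
          rw [div_le_iff₀ hu'x]
          linarith [hexp]
      _ ≤ 1 / (1 + K * Real.log k) := hbound
  refine ⟨key, ?_⟩
  intro k hk
  have hlogk : 0 < Real.log k := Real.log_pos hk
  have hKl : 0 < K * Real.log k := mul_pos hK hlogk
  have hc1 : (1 : ℝ) / (1 + K * Real.log k) < 1 := by
    rw [div_lt_one (by linarith)]; linarith
  have hev : ∀ᶠ x in atTop, u' (k * x) / u' x ≤ 1 / (1 + K * Real.log k) := by
    filter_upwards [eventually_ge_atTop M] with x hx using key k hk x hx
  have hev0 : ∀ᶠ x in atTop, (0:ℝ) ≤ u' (k * x) / u' x := by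
    filter_upwards [eventually_ge_atTop M] with x hx
    have hxpos : 0 < x := lt_of_lt_of_le hM hx
    have hkxpos : 0 < k * x := mul_pos (by linarith) hxpos
    exact div_nonneg (hu'_pos _ hkxpos).le (hu'_pos _ hxpos).le
  have hcobdd : Filter.IsCoboundedUnder (· ≤ ·) atTop (fun x => u' (k * x) / u' x) :=
    Filter.IsBoundedUnder.isCoboundedUnder_le ⟨0, by simpa using hev0⟩
  calc Filter.limsup (fun x => u' (k * x) / u' x) atTop
      ≤ 1 / (1 + K * Real.log k) := Filter.limsup_le_of_le hcobdd hev
    _ < 1 := hc1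
end
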